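/- arXiv:1211.0463 — 3 statements merged into one kernel-verified Lean document; each statement's English description precedes it below -/
import Mathlib

section
/- Let G be a nice d-regular finite simple graph on n vertices with d ≥ 2. Then ls_σ^e(G) ≤ ⌈(2e(d+1)(n−d))^{1/(d−1)}⌉, where e is Euler's number: for k = ⌈(2e(d+1)(n−d))^{1/(d−1)}⌉, for every linear order on E(G) and every assignment to each edge of a set of k real numbers, there exists a weighting taking each edge's weight from its assigned set such that all vertices of G receive pairwise distinct induced sequences. -/
/-!
Common definitions: sequence colourings induced by an edge weighting and a linear
order on the edge set of a finite simple graph.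
-/

open Finset

variable {V : Type*}

/-- The list of edges incident to `v`, sorted in increasing order with respect to the
linear order `σ` on `E(G)`. -/
noncomputable def incEdges [Fintype V] [DecidableEq V] (G : SimpleGraph V) [DecidableRel G.Adj]
    (σ : LinearOrder G.edgeSet) (v : V) : List G.edgeSet :=
  letI := σ
  ((Finset.univ : Finset G.edgeSet).filter (fun e : G.edgeSet => v ∈ (e : Sym2 V))).sort σ.le

/-- The induced sequence colouring: `c(v)` is the list of weights `w(e)` of the edges `e`
incident to `v`, written in increasing order of `e` with respect to `σ`. -/
noncomputable def seqColor [Fintype V] [DecidableEq V] (G : SimpleGraph V) [DecidableRel G.Adj]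
    (σ : LinearOrder G.edgeSet) {α : Type*} (w : G.edgeSet → α) (v : V) : List α :=
  (incEdges G σ v).map w

/-- The induced sequence colouring is proper: adjacent vertices receive distinct sequences. -/
def ProperSeq [Fintype V] [DecidableEq V] (G : SimpleGraph V) [DecidableRel G.Adj]
    (σ : LinearOrder G.edgeSet) (w : G.edgeSet → ℝ) : Prop :=
  ∀ u v : V, G.Adj u v → seqColor G σ w u ≠ seqColor G σ w v

/-- A graph is nice if no connected component is isomorphic to `K₂`; equivalently,
no edge has both of its endpoints of degree `1`. -/
def Nice [Fintype V] [DecidableEq V] (G : SimpleGraph V) [DecidableRel G.Adj] : Prop :=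
  ∀ u v : V, G.Adj u v → 2 ≤ G.degree u ∨ 2 ≤ G.degree v

section AuxLLL


section LLLsec
variable {ι : Type*} [Fintype ι] [DecidableEq ι] {α : Type*} [DecidableEq α]

/-- merge two functions along a finset -/
def mg (s : Finset ι) (f g : ι → α) : ι → α := fun i => if i ∈ s then f i else g i

lemma indep_card (A : ι → Finset α) (s t : Finset ι) (hst : Disjoint s t)
    (P Q : (ι → α) → Prop) [DecidablePred P] [DecidablePred Q]
    (hP : ∀ f g, (∀ i ∈ s, f i = g i) → (P f ↔ P g))
    (hQ : ∀ f g, (∀ i ∈ t, f i = g i) → (Q f ↔ Q g)) :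
    ((Fintype.piFinset A).filter (fun f => P f ∧ Q f)).card * (Fintype.piFinset A).card
      = ((Fintype.piFinset A).filter P).card * ((Fintype.piFinset A).filter Q).card := by
  rw [← Finset.card_product, ← Finset.card_product]
  have hmem : ∀ f g, f ∈ Fintype.piFinset A → g ∈ Fintype.piFinset A →
      mg s f g ∈ Fintype.piFinset A := by
    intro f g hf hg
    rw [Fintype.mem_piFinset] at *
    intro i
    by_cases hi : i ∈ s <;> simp [mg, hi, hf i, hg i]
  have hs : ∀ f g : ι → α, ∀ i ∈ s, mg s f g i = f i := by
    intro f g i hi; simp [mg, hi]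
  have ht : ∀ f g : ι → α, ∀ i ∈ t, mg s f g i = g i := by
    intro f g i hi
    have : i ∉ s := fun h => (Finset.disjoint_left.mp hst h) hi
    simp [mg, this]
  have hinv : ∀ f g : ι → α, mg s (mg s f g) (mg s g f) = f := by
    intro f g; funext i; by_cases hi : i ∈ s <;> simp [mg, hi]
  refine Finset.card_bij' (fun pq _ => (mg s pq.1 pq.2, mg s pq.2 pq.1))
    (fun pq _ => (mg s pq.1 pq.2, mg s pq.2 pq.1)) ?_ ?_ ?_ ?_
  · rintro ⟨f, g⟩ hfg
    rw [Finset.mem_product] at hfg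
    obtain ⟨hf, hgΩ⟩ := hfg
    rw [Finset.mem_filter] at hf
    obtain ⟨hfΩ, hPf, hQf⟩ := hf
    rw [Finset.mem_product]
    constructor
    · rw [Finset.mem_filter]
      exact ⟨hmem _ _ hfΩ hgΩ, (hP f _ (fun i hi => (hs f g i hi).symm)).mp hPf⟩
    · rw [Finset.mem_filter]
      exact ⟨hmem _ _ hgΩ hfΩ, (hQ f _ (fun i hi => (ht g f i hi).symm)).mp hQf⟩
  · rintro ⟨f, g⟩ hfg
    rw [Finset.mem_product] at hfg
    obtain ⟨hf, hg⟩ := hfg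
    rw [Finset.mem_filter] at hf hg
    obtain ⟨hfΩ, hPf⟩ := hf
    obtain ⟨hgΩ, hQg⟩ := hg
    rw [Finset.mem_product, Finset.mem_filter]
    refine ⟨⟨hmem _ _ hfΩ hgΩ, ?_, ?_⟩, hmem _ _ hgΩ hfΩ⟩
    · exact (hP f _ (fun i hi => (hs f g i hi).symm)).mp hPf
    · exact (hQ g _ (fun i hi => (ht f g i hi).symm)).mp hQg
  · rintro ⟨f, g⟩ _
    simp only [hinv]
  · rintro ⟨f, g⟩ _
    simp only [hinv]

end LLLsec

section LLLmain
variable {ι : Type*} [Fintype ι] [DecidableEq ι] {α : Type*} [DecidableEq α]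

theorem LLL_counting {κ : Type*} [Fintype κ] [DecidableEq κ] (A : ι → Finset α)
    (hA : ∀ i, (A i).Nonempty)
    (bad : κ → (ι → α) → Prop) [∀ j, DecidablePred (bad j)] (vbl : κ → Finset ι)
    (hloc : ∀ j f g, (∀ i ∈ vbl j, f i = g i) → (bad j f ↔ bad j g))
    (p : ℝ) (hp0 : 0 ≤ p) (D : ℕ) (hD : 1 ≤ D)
    (hp : ∀ j, (((Fintype.piFinset A).filter (bad j)).card : ℝ)
        ≤ p * (Fintype.piFinset A).card)
    (hdep : ∀ j, ((univ.filter fun j' => (vbl j ∩ vbl j').Nonempty).card) ≤ D)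
    (heD : Real.exp 1 * p * D ≤ 1) :
    ∃ f ∈ Fintype.piFinset A, ∀ j, ¬ bad j f := by
  set Ω : Finset (ι → α) := Fintype.piFinset A with hΩdef
  have hΩne : Ω.Nonempty := by
    rw [hΩdef, Fintype.piFinset_nonempty]; exact hA
  have hΩpos : (0:ℝ) < Ω.card := by exact_mod_cast hΩne.card_pos
  set x : ℝ := 1 / (D + 1) with hxdef
  have hD0 : (0:ℝ) < D := by exact_mod_cast hD
  have hx0 : 0 < x := by positivity
  have hx1 : x < 1 := by
    rw [hxdef, div_lt_one (by positivity)]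
    linarith
  -- p ≤ x * (1-x)^(D-1)
  have hpx : p ≤ x * (1 - x) ^ (D - 1) := by
    have hexp : ((1:ℝ) + 1 / D) ^ D ≤ Real.exp 1 := by
      have h1 : (1:ℝ) + 1/D ≤ Real.exp (1/D) := by
        have := Real.add_one_le_exp (1/(D:ℝ)); linarith
      calc ((1:ℝ) + 1/D) ^ D ≤ (Real.exp (1/D)) ^ D :=
            pow_le_pow_left₀ (by positivity) h1 D
        _ = Real.exp ((D:ℝ) * (1/D)) := (Real.exp_nat_mul _ D).symm
        _ = Real.exp 1 := by rw [mul_one_div, div_self (ne_of_gt hD0)]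
    have h1x : (1 - x) = (D:ℝ) / (D+1) := by
      rw [hxdef]; field_simp; ring
    have hxD : x = ((D:ℝ)/(D+1)) / D := by
      rw [hxdef]; field_simp
    have hD1 : (D:ℝ)/(D+1) * ((D:ℝ)/(D+1))^(D-1) = ((D:ℝ)/(D+1))^D := by
      rw [← pow_succ']
      congr 1
      omega
    have hqe : (1:ℝ)/Real.exp 1 ≤ ((D:ℝ)/(D+1))^D := by
      rw [div_le_iff₀ (Real.exp_pos 1)]
      have h3 : ((D:ℝ)/(D+1))^D * ((1:ℝ) + 1/D)^D = 1 := by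
        rw [← mul_pow]
        have h4 : (D:ℝ)/(D+1) * (1+1/D) = 1 := by field_simp
        rw [h4, one_pow]
      calc (1:ℝ) = ((D:ℝ)/(D+1))^D * ((1:ℝ)+1/D)^D := h3.symm
        _ ≤ ((D:ℝ)/(D+1))^D * Real.exp 1 :=
            mul_le_mul_of_nonneg_left hexp (by positivity)
    have hform : x * (1-x)^(D-1) = ((D:ℝ)/(D+1))^D / D := by
      rw [h1x, hxD, div_mul_eq_mul_div, hD1]
    have hkey : 1 / (Real.exp 1 * D) ≤ x * (1-x)^(D-1) := by
      rw [hform]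
      have heq : (1:ℝ) / (Real.exp 1 * D) = (1/Real.exp 1) / D := by
        rw [div_div]
      rw [heq]
      exact div_le_div_of_nonneg_right hqe hD0.le
    have hple : p ≤ 1 / (Real.exp 1 * D) := by
      rw [le_div_iff₀ (by positivity)]
      calc p * (Real.exp 1 * (D:ℝ)) = Real.exp 1 * p * D := by ring
        _ ≤ 1 := heD
    linarith
  -- Good sets
  set Good : Finset κ → Finset (ι → α) :=
    (fun T => Ω.filter (fun f => ∀ j ∈ T, ¬ bad j f)) with hGoodDef
  have hGoodMono : ∀ T₂ T : Finset κ, T₂ ⊆ T → Good T ⊆ Good T₂ := by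
    intro T₂ T hsub f hf
    rw [hGoodDef, Finset.mem_filter] at hf ⊢
    exact ⟨hf.1, fun j hj => hf.2 j (hsub hj)⟩
  -- independence step
  have indepStep : ∀ (j : κ) (T₂ : Finset κ), (∀ j' ∈ T₂, vbl j ∩ vbl j' = ∅) →
      (((Good T₂).filter (bad j)).card : ℝ) ≤ p * ((Good T₂).card : ℝ) := by
    intro j T₂ hdisj
    have hdisj2 : Disjoint (T₂.biUnion vbl) (vbl j) := by
      rw [Finset.disjoint_left]
      intro i hi hij
      obtain ⟨j', hj', hij'⟩ := Finset.mem_biUnion.mp hi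
      have : i ∈ vbl j ∩ vbl j' := Finset.mem_inter.mpr ⟨hij, hij'⟩
      rw [hdisj j' hj'] at this
      exact absurd this (Finset.notMem_empty i)
    have hind := indep_card A (T₂.biUnion vbl) (vbl j) hdisj2
      (fun f => ∀ j' ∈ T₂, ¬ bad j' f) (bad j)
      (by
        intro f g hfg
        refine forall₂_congr (fun j' hj' => ?_)
        exact not_congr (hloc j' f g (fun i hi =>
          hfg i (Finset.mem_biUnion.mpr ⟨j', hj', hi⟩))))
      (fun f g hfg => hloc j f g hfg)
    have heq : Ω.filter (fun f => (∀ j' ∈ T₂, ¬ bad j' f) ∧ bad j f)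
        = (Good T₂).filter (bad j) := by
      rw [hGoodDef, Finset.filter_filter]
    rw [heq] at hind
    have h2 : (((Good T₂).filter (bad j)).card : ℝ) * (Ω.card : ℝ)
        ≤ ((Good T₂).card : ℝ) * (p * (Ω.card : ℝ)) := by
      rw [show (((Good T₂).filter (bad j)).card : ℝ) * (Ω.card : ℝ)
          = ((((Good T₂).filter (bad j)).card * Ω.card : ℕ) : ℝ) by push_cast; ring]
      rw [hind]
      push_cast
      exact mul_le_mul_of_nonneg_left (hp j) (by positivity)
    have := le_of_mul_le_mul_right (by linarith [h2] : (((Good T₂).filter (bad j)).card : ℝ) * (Ω.card : ℝ) ≤ (p * ((Good T₂).card : ℝ)) * (Ω.card : ℝ)) hΩpos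
    exact this
  -- key claim
  have key : ∀ N : ℕ, ∀ T : Finset κ, ∀ j, T.card ≤ N → j ∉ T →
      (((Good T).filter (bad j)).card : ℝ) ≤ x * ((Good T).card : ℝ) := by
    intro N
    induction N with
    | zero =>
      intro T j hcard _
      have hT : T = ∅ := Finset.card_eq_zero.mp (Nat.le_zero.mp hcard)
      subst hT
      have hx2 : (1-x)^(D-1) ≤ 1 := pow_le_one₀ (by linarith) (by linarith)
      have hGe : (Good ∅) = Ω := by rw [hGoodDef]; simp
      rw [hGe]
      calc ((Ω.filter (bad j)).card : ℝ) ≤ p * Ω.card := hp j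
        _ ≤ (x * (1-x)^(D-1)) * Ω.card :=
            mul_le_mul_of_nonneg_right hpx (by positivity)
        _ ≤ x * Ω.card := by
            have h0 : (0:ℝ) ≤ (Ω.card : ℝ) := by positivity
            nlinarith [mul_le_mul_of_nonneg_right (mul_le_mul_of_nonneg_left hx2 hx0.le) h0]
    | succ N ih =>
      intro T j hcard hjT
      set T₁ := T.filter (fun j' => (vbl j ∩ vbl j').Nonempty) with hT₁
      set T₂ := T \ T₁ with hT₂
      have hT₁T : T₁ ⊆ T := Finset.filter_subset _ _
      have hT₂dis : ∀ j' ∈ T₂, vbl j ∩ vbl j' = ∅ := by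
        intro j' hj'
        rw [hT₂, Finset.mem_sdiff] at hj'
        by_contra hne
        exact hj'.2 (Finset.mem_filter.mpr
          ⟨hj'.1, Finset.nonempty_iff_ne_empty.mpr hne⟩)
      have hc : T₁.card ≤ D - 1 := by
        rcases Finset.eq_empty_or_nonempty (vbl j) with hv | hv
        · have hT₁e : T₁ = ∅ := by
            rw [hT₁]
            apply Finset.filter_false_of_mem
            intro j' _
            rw [hv, Finset.empty_inter]
            exact Finset.not_nonempty_empty
          rw [hT₁e, Finset.card_empty]
          omega
        · have hjmem : j ∈ univ.filter (fun j' => (vbl j ∩ vbl j').Nonempty) := by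
            rw [Finset.mem_filter, Finset.inter_self]
            exact ⟨Finset.mem_univ _, hv⟩
          have hsub : T₁ ⊆ (univ.filter (fun j' => (vbl j ∩ vbl j').Nonempty)).erase j := by
            intro a ha
            rw [Finset.mem_erase]
            have haT : a ∈ T := hT₁T ha
            rw [hT₁, Finset.mem_filter] at ha
            exact ⟨fun h => hjT (h ▸ haT), Finset.mem_filter.mpr ⟨Finset.mem_univ _, ha.2⟩⟩
          have hle := Finset.card_le_card hsub
          rw [Finset.card_erase_of_mem hjmem] at hle
          have := hdep j
          omega
      -- peel
      have peel : ∀ S : Finset κ, S ⊆ T₁ →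
          (1-x) ^ S.card * ((Good T₂).card : ℝ) ≤ ((Good (T₂ ∪ S)).card : ℝ) := by
        intro S
        induction S using Finset.induction_on with
        | empty => intro _; simp
        | insert a S ha ihS =>
          intro hins
          have haT₁ : a ∈ T₁ := hins (Finset.mem_insert_self _ _)
          have hST₁ : S ⊆ T₁ := fun y hy => hins (Finset.mem_insert_of_mem hy)
          have haW : a ∉ T₂ ∪ S := by
            intro h
            rcases Finset.mem_union.mp h with h' | h'
            · rw [hT₂, Finset.mem_sdiff] at h'
              exact h'.2 haT₁
            · exact ha h'
          have hWT : T₂ ∪ S ⊆ T :=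
            Finset.union_subset (hT₂ ▸ Finset.sdiff_subset) (hST₁.trans hT₁T)
          have hWcard : (T₂ ∪ S).card ≤ N := by
            have hsube : T₂ ∪ S ⊆ T.erase a := by
              intro y hy
              rw [Finset.mem_erase]
              exact ⟨fun h => haW (h ▸ hy), hWT hy⟩
            have h1 := Finset.card_le_card hsube
            rw [Finset.card_erase_of_mem (hT₁T haT₁)] at h1
            omega
          have hkeyW := ih (T₂ ∪ S) a hWcard haW
          have hGins : Good (T₂ ∪ insert a S)
              = (Good (T₂ ∪ S)).filter (fun f => ¬ bad a f) := by
            rw [Finset.union_insert, hGoodDef]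
            rw [Finset.filter_filter]
            apply Finset.filter_congr
            intro f _
            simp only [Finset.forall_mem_insert]
            tauto
          have hsplit := Finset.card_filter_add_card_filter_not
            (s := Good (T₂ ∪ S)) (bad a)
          have hcard2 : (((Good (T₂ ∪ S)).filter (fun f => ¬ bad a f)).card : ℝ)
              ≥ (1 - x) * ((Good (T₂ ∪ S)).card : ℝ) := by
            have hn : (((Good (T₂ ∪ S)).filter (fun f => ¬ bad a f)).card : ℝ)
                = ((Good (T₂ ∪ S)).card : ℝ) - (((Good (T₂ ∪ S)).filter (bad a)).card : ℝ) := by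
              have := hsplit
              push_cast [← this]
              ring
            rw [hn]
            nlinarith [hkeyW]
          rw [hGins]
          calc (1-x) ^ (insert a S).card * ((Good T₂).card : ℝ)
              = (1-x) * ((1-x) ^ S.card * ((Good T₂).card : ℝ)) := by
                rw [Finset.card_insert_of_notMem ha]; ring
            _ ≤ (1-x) * ((Good (T₂ ∪ S)).card : ℝ) :=
                mul_le_mul_of_nonneg_left (ihS hST₁) (by linarith)
            _ ≤ (((Good (T₂ ∪ S)).filter (fun f => ¬ bad a f)).card : ℝ) := hcard2
      have hTsplit : T₂ ∪ T₁ = T := Finset.sdiff_union_of_subset hT₁T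
      have hC := peel T₁ (Finset.Subset.refl _)
      rw [hTsplit] at hC
      have hA1 : ((Good T).filter (bad j)).card ≤ ((Good T₂).filter (bad j)).card :=
        Finset.card_le_card (Finset.monotone_filter_left _ (hGoodMono T₂ T (hT₂ ▸ Finset.sdiff_subset)))
      have hB := indepStep j T₂ hT₂dis
      have hpow : (1-x)^(D-1) ≤ (1-x)^(T₁.card) :=
        pow_le_pow_of_le_one (by linarith) (by linarith) hc
      calc (((Good T).filter (bad j)).card : ℝ)
          ≤ (((Good T₂).filter (bad j)).card : ℝ) := by exact_mod_cast hA1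
        _ ≤ p * ((Good T₂).card : ℝ) := hB
        _ ≤ (x * (1-x)^(D-1)) * ((Good T₂).card : ℝ) :=
            mul_le_mul_of_nonneg_right hpx (by positivity)
        _ ≤ (x * (1-x)^(T₁.card)) * ((Good T₂).card : ℝ) := by
            have h0 : (0:ℝ) ≤ ((Good T₂).card : ℝ) := by positivity
            nlinarith [mul_le_mul_of_nonneg_right (mul_le_mul_of_nonneg_left hpow hx0.le) h0]
        _ = x * ((1-x)^(T₁.card) * ((Good T₂).card : ℝ)) := by ring
        _ ≤ x * ((Good T).card : ℝ) := mul_le_mul_of_nonneg_left hC hx0.le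
  -- chain
  have chain : ∀ T : Finset κ, (1-x)^(T.card) * (Ω.card : ℝ) ≤ ((Good T).card : ℝ) := by
    intro T
    induction T using Finset.induction_on with
    | empty =>
      have : Good ∅ = Ω := by rw [hGoodDef]; simp
      rw [this]; simp
    | insert a S ha ihS =>
      have hkeyS := key S.card S a (le_refl _) ha
      have hGins : Good (insert a S) = (Good S).filter (fun f => ¬ bad a f) := by
        rw [hGoodDef, Finset.filter_filter]
        apply Finset.filter_congr
        intro f _
        simp only [Finset.forall_mem_insert]
        tauto
      have hsplit := Finset.card_filter_add_card_filter_not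
        (s := Good S) (bad a)
      have hn : (((Good S).filter (fun f => ¬ bad a f)).card : ℝ)
          = ((Good S).card : ℝ) - (((Good S).filter (bad a)).card : ℝ) := by
        push_cast [← hsplit]
        ring
      rw [hGins, hn, Finset.card_insert_of_notMem ha]
      have : (1-x) ^ (S.card + 1) * (Ω.card : ℝ)
          = (1-x) * ((1-x)^(S.card) * (Ω.card : ℝ)) := by ring
      rw [this]
      nlinarith
  -- conclude
  have hfin := chain Finset.univ
  have hpos : (0:ℝ) < ((Good Finset.univ).card : ℝ) := by
    have h1 : (0:ℝ) < (1-x)^(Finset.univ (α := κ)).card * (Ω.card : ℝ) := by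
      apply mul_pos (pow_pos (by linarith) _) hΩpos
    linarith
  have hne : (Good Finset.univ).Nonempty := by
    rw [← Finset.card_pos]
    exact_mod_cast hpos
  obtain ⟨f, hf⟩ := hne
  rw [hGoodDef, Finset.mem_filter] at hf
  exact ⟨f, hf.1, fun j => hf.2 j (Finset.mem_univ j)⟩


end LLLmain

section GraphAux
variable [Fintype V] [DecidableEq V] (G : SimpleGraph V) [DecidableRel G.Adj]

lemma incEdges_mem (σ : LinearOrder G.edgeSet) (v : V) (e : G.edgeSet) :
    e ∈ incEdges G σ v ↔ v ∈ (e : Sym2 V) := by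
  unfold incEdges
  letI := σ
  rw [Finset.mem_sort]
  simp

lemma card_filter_incident (v : V) :
    ((univ : Finset G.edgeSet).filter (fun e : G.edgeSet => v ∈ (e : Sym2 V))).card = G.degree v := by
  rw [← SimpleGraph.card_incidenceFinset_eq_degree G v]
  refine Finset.card_bij (fun e _ => (e : Sym2 V)) ?_ ?_ ?_
  · intro e he
    rw [SimpleGraph.mem_incidenceFinset]
    rw [Finset.mem_filter] at he
    exact ⟨e.2, he.2⟩
  · intro e1 _ e2 _ h
    exact Subtype.ext h
  · intro f hf
    rw [SimpleGraph.mem_incidenceFinset] at hf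
    exact ⟨⟨f, hf.1⟩, Finset.mem_filter.mpr ⟨Finset.mem_univ _, hf.2⟩, rfl⟩

lemma incEdges_length (σ : LinearOrder G.edgeSet) (v : V) :
    (incEdges G σ v).length = G.degree v := by
  unfold incEdges
  letI := σ
  rw [Finset.length_sort]
  exact card_filter_incident G v

lemma seq_determined (σ : LinearOrder G.edgeSet) {u v : V}
    (hlen : (incEdges G σ u).length = (incEdges G σ v).length)
    {w w' : G.edgeSet → ℝ}
    (hw : seqColor G σ w u = seqColor G σ w v)
    (hw' : seqColor G σ w' u = seqColor G σ w' v)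
    (hoff : ∀ e : G.edgeSet, ¬(u ∈ (e : Sym2 V) ∧ v ∉ (e : Sym2 V)) → w e = w' e) :
    w = w' := by
  funext e
  by_cases he : u ∈ (e : Sym2 V) ∧ v ∉ (e : Sym2 V)
  swap
  · exact hoff e he
  have hmem : e ∈ incEdges G σ u := (incEdges_mem G σ u e).mpr he.1
  obtain ⟨t, ht, hte⟩ := List.mem_iff_getElem.mp hmem
  have ht' : t < (incEdges G σ v).length := hlen ▸ ht
  set f : G.edgeSet := (incEdges G σ v)[t]'ht' with hfdef
  have h1 : ∀ (ww : G.edgeSet → ℝ), seqColor G σ ww u = seqColor G σ ww v →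
      ww e = ww f := by
    intro ww hww
    have heq : (incEdges G σ u).map ww = (incEdges G σ v).map ww := hww
    have htm : t < ((incEdges G σ u).map ww).length := by
      rw [List.length_map]; exact ht
    have htm' : t < ((incEdges G σ v).map ww).length := by
      rw [List.length_map]; exact ht'
    calc ww e = ((incEdges G σ u).map ww)[t]'htm := by
          rw [List.getElem_map]; rw [hte]
      _ = ((incEdges G σ v).map ww)[t]'htm' := List.getElem_of_eq heq _
      _ = ww f := by rw [List.getElem_map]
  have hfv : v ∈ (f : Sym2 V) := by
    have : f ∈ incEdges G σ v := List.getElem_mem _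
    exact (incEdges_mem G σ v f).mp this
  have hfoff : w f = w' f := hoff f (fun hc => hc.2 hfv)
  rw [h1 w hw, hfoff, ← h1 w' hw']

open scoped Classical in
lemma bad_count (σ : LinearOrder G.edgeSet) (L : G.edgeSet → Finset ℝ) (k : ℕ) (hk : 1 ≤ k)
    (hL : ∀ e, (L e).card = k) {u v : V} (huv : u ≠ v) (d : ℕ)
    (hdu : G.degree u = d) (hdv : G.degree v = d) :
    ((Fintype.piFinset L).filter
        (fun w => seqColor G σ w u = seqColor G σ w v)).card * k ^ (d - 1)
      ≤ (Fintype.piFinset L).card := by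
  set E' : Finset G.edgeSet :=
    univ.filter (fun e : G.edgeSet => u ∈ (e : Sym2 V) ∧ v ∉ (e : Sym2 V)) with hE'def
  -- |E'| ≥ d - 1
  have hEcard : d - 1 ≤ E'.card := by
    have hEu : ((univ : Finset G.edgeSet).filter (fun e : G.edgeSet => u ∈ (e : Sym2 V))).card = d :=
      (card_filter_incident G u).trans hdu
    set Eu := (univ : Finset G.edgeSet).filter (fun e : G.edgeSet => u ∈ (e : Sym2 V)) with hEu_def
    have hsplit := Finset.card_filter_add_card_filter_not
      (s := Eu) (fun e : G.edgeSet => v ∈ (e : Sym2 V))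
    have hboth : (Eu.filter (fun e : G.edgeSet => v ∈ (e : Sym2 V))).card ≤ 1 := by
      apply Finset.card_le_one.mpr
      intro e1 h1 e2 h2
      rw [Finset.mem_filter, hEu_def, Finset.mem_filter] at h1 h2
      apply Subtype.ext
      have he1 : (e1 : Sym2 V) = s(u, v) :=
        (Sym2.mem_and_mem_iff huv).mp ⟨h1.1.2, h1.2⟩
      have he2 : (e2 : Sym2 V) = s(u, v) :=
        (Sym2.mem_and_mem_iff huv).mp ⟨h2.1.2, h2.2⟩
      rw [he1, he2]
    have hneg : Eu.filter (fun e : G.edgeSet => ¬ v ∈ (e : Sym2 V)) = E' := by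
      rw [hEu_def, hE'def, Finset.filter_filter]
    rw [hneg] at hsplit
    omega
  -- picking
  have hne : ∀ e, (L e).Nonempty := by
    intro e
    rw [← Finset.card_pos, hL e]
    omega
  set c : G.edgeSet → ℝ := fun e => (hne e).choose with hcdef
  have hc : ∀ e, c e ∈ L e := fun e => (hne e).choose_spec
  set L' : G.edgeSet → Finset ℝ := fun e => if e ∈ E' then {c e} else L e with hL'def
  set φ : (G.edgeSet → ℝ) → (G.edgeSet → ℝ) :=
    fun w e => if e ∈ E' then c e else w e with hφdef
  have hinj : ((Fintype.piFinset L).filter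
      (fun w => seqColor G σ w u = seqColor G σ w v)).card ≤
      (Fintype.piFinset L').card := by
    apply Finset.card_le_card_of_injOn φ
    · intro w hw
      simp only [Finset.coe_filter, Set.mem_setOf_eq, Finset.mem_coe] at hw ⊢
      rw [Fintype.mem_piFinset] at hw ⊢
      intro e
      by_cases he : e ∈ E' <;> simp [hφdef, hL'def, he, hw.1 e]
    · intro w hwmem w' hw'mem heq
      rw [Finset.coe_filter, Set.mem_setOf_eq] at hwmem hw'mem
      have hlen : (incEdges G σ u).length = (incEdges G σ v).length := by
        rw [incEdges_length, incEdges_length, hdu, hdv]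
      apply seq_determined G σ hlen hwmem.2 hw'mem.2
      intro e heE
      have heE' : e ∉ E' := by
        rw [hE'def, Finset.mem_filter]
        tauto
      have := congrFun heq e
      simpa [hφdef, heE'] using this
  -- counting
  have hcardL' : (Fintype.piFinset L').card
      = k ^ ((univ : Finset G.edgeSet).filter (fun e : G.edgeSet => e ∉ E')).card := by
    rw [Fintype.card_piFinset]
    have : ∀ e : G.edgeSet, (L' e).card = if e ∈ E' then 1 else k := by
      intro e
      by_cases he : e ∈ E' <;> simp [hL'def, he, hL e]
    rw [Finset.prod_congr rfl (fun e _ => this e)]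
    rw [Finset.prod_ite, Finset.prod_const, Finset.prod_const, one_pow, one_mul]
  have hcardL : (Fintype.piFinset L).card
      = k ^ E'.card * k ^ ((univ : Finset G.edgeSet).filter (fun e : G.edgeSet => e ∉ E')).card := by
    rw [Fintype.card_piFinset]
    rw [Finset.prod_congr rfl (fun e _ => hL e)]
    rw [Finset.prod_const, ← pow_add]
    congr 1
    have hsplit := Finset.card_filter_add_card_filter_not
      (s := (univ : Finset G.edgeSet)) (fun e : G.edgeSet => e ∈ E')
    have : (univ : Finset G.edgeSet).filter (fun e => e ∈ E') = E' := by
      ext e; simp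
    rw [this] at hsplit
    omega
  calc ((Fintype.piFinset L).filter
        (fun w => seqColor G σ w u = seqColor G σ w v)).card * k ^ (d - 1)
      ≤ (Fintype.piFinset L').card * k ^ (d-1) := Nat.mul_le_mul_right _ hinj
    _ = k ^ ((univ : Finset G.edgeSet).filter (fun e : G.edgeSet => e ∉ E')).card * k ^ (d-1) := by
        rw [hcardL']
    _ ≤ k ^ ((univ : Finset G.edgeSet).filter (fun e : G.edgeSet => e ∉ E')).card * k ^ E'.card := by
        apply Nat.mul_le_mul_left
        exact Nat.pow_le_pow_right hk hEcard
    _ = (Fintype.piFinset L).card := by rw [hcardL]; ring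

end GraphAux

lemma two_mul_card_le_offDiag {V : Type*} [Fintype V] [DecidableEq V] (S : Finset V)
    (B : Finset (Sym2 V)) (hB : ∀ j ∈ B, ¬ j.IsDiag ∧ ∀ y ∈ j, y ∈ S) :
    2 * B.card ≤ S.card * S.card - S.card := by
  rw [← Finset.offDiag_card]
  have hmap : ∀ q ∈ S.offDiag, (Function.uncurry Sym2.mk) q ∈ S.offDiag.image (Function.uncurry Sym2.mk) :=
    fun q hq => Finset.mem_image_of_mem _ hq
  have hcount := Finset.card_eq_sum_card_fiberwise hmap
  have hsubB : B ⊆ S.offDiag.image (Function.uncurry Sym2.mk) := by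
    intro j hj
    obtain ⟨hnd, hmem⟩ := hB j hj
    induction j using Sym2.ind with
    | _ x y =>
      have hxy : x ≠ y := fun h => hnd (Sym2.mk_isDiag_iff.mpr h)
      have hx : x ∈ S := hmem x (Sym2.mem_mk_left x y)
      have hy : y ∈ S := hmem y (Sym2.mem_mk_right x y)
      exact Finset.mem_image_of_mem _ (Finset.mem_offDiag.mpr ⟨hx, hy, hxy⟩)
  have hfiber : ∀ j ∈ B, 2 ≤ (S.offDiag.filter (fun q => (Function.uncurry Sym2.mk) q = j)).card := by
    intro j hj
    obtain ⟨hnd, hmem⟩ := hB j hj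
    induction j using Sym2.ind with
    | _ x y =>
      have hxy : x ≠ y := fun h => hnd (Sym2.mk_isDiag_iff.mpr h)
      have hx : x ∈ S := hmem x (Sym2.mem_mk_left x y)
      have hy : y ∈ S := hmem y (Sym2.mem_mk_right x y)
      have hsub2 : ({(x,y), (y,x)} : Finset (V × V)) ⊆
          S.offDiag.filter (fun q => (Function.uncurry Sym2.mk) q = s(x,y)) := by
        intro q hq
        rcases Finset.mem_insert.mp hq with h | h
        · subst h
          exact Finset.mem_filter.mpr ⟨Finset.mem_offDiag.mpr ⟨hx, hy, hxy⟩, rfl⟩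
        · rw [Finset.mem_singleton] at h
          subst h
          exact Finset.mem_filter.mpr
            ⟨Finset.mem_offDiag.mpr ⟨hy, hx, hxy.symm⟩, Sym2.eq_swap⟩
      have h2 : ({(x,y), (y,x)} : Finset (V × V)).card = 2 :=
        Finset.card_pair (fun h => hxy (congrArg Prod.fst h))
      calc 2 = ({(x,y), (y,x)} : Finset (V × V)).card := h2.symm
        _ ≤ _ := Finset.card_le_card hsub2
  calc 2 * B.card = ∑ _j ∈ B, 2 := by rw [Finset.sum_const, smul_eq_mul, mul_comm]
    _ ≤ ∑ j ∈ B, (S.offDiag.filter (fun q => (Function.uncurry Sym2.mk) q = j)).card :=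
        Finset.sum_le_sum hfiber
    _ ≤ ∑ j ∈ S.offDiag.image (Function.uncurry Sym2.mk), (S.offDiag.filter (fun q => (Function.uncurry Sym2.mk) q = j)).card :=
        Finset.sum_le_sum_of_subset hsubB
    _ = S.offDiag.card := hcount.symm

lemma pow_helper : ∀ d : ℕ, 11 ≤ d → 4*d^2 + 2*d < 2^d := by
  intro d hd
  induction d, hd using Nat.le_induction with
  | base => norm_num
  | succ n hn ih =>
    have h1 : 2^(n+1) = 2 * 2^n := by rw [pow_succ]; ring
    nlinarith

lemma dense_numeric (d n k : ℕ) (hd : 2 ≤ d) (hdn : d < n) (hn : n ≤ 2*d+1)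
    (hk2 : 2 ≤ k)
    (hkX : 2 * Real.exp 1 * ((d:ℝ)+1) * ((n:ℝ)-(d:ℝ)) ≤ (k:ℝ)^(d-1)) :
    ((n:ℝ) * ((n:ℝ)-1)) < 2 * (k:ℝ)^(d-1) := by
  have he : (2.71:ℝ) < Real.exp 1 := by
    have := Real.exp_one_gt_d9
    linarith
  by_cases hd10 : d ≤ 10
  · have hdR : (d:ℝ) ≤ 10 := by exact_mod_cast hd10
    have h2R : (2:ℝ) ≤ (d:ℝ) := by exact_mod_cast hd
    have hnlo : (d:ℝ) + 1 ≤ (n:ℝ) := by exact_mod_cast hdn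
    have hnhi : (n:ℝ) ≤ 2*(d:ℝ)+1 := by exact_mod_cast hn
    have hmain : (n:ℝ) * ((n:ℝ)-1) < 2 * (2 * Real.exp 1 * ((d:ℝ)+1) * ((n:ℝ)-(d:ℝ))) := by
      set t : ℝ := (n:ℝ) - d with ht
      have ht1 : 1 ≤ t := by simp only [ht]; linarith
      have ht2 : t ≤ (d:ℝ) + 1 := by simp only [ht]; linarith
      have hnt : (n:ℝ) = (d:ℝ) + t := by simp only [ht]; ring
      rw [hnt]
      have hs1 : (t-1)*((d:ℝ)+1-t) ≥ 0 :=
        mul_nonneg (by linarith) (by linarith)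
      have h4 : (t-1)*(4*Real.exp 1*((d:ℝ)+1) - (3*(d:ℝ)+1)) ≥ 0 := by
        apply mul_nonneg (by linarith)
        nlinarith [he, h2R]
      have h5 : (10 - (d:ℝ))*((d:ℝ)-2) ≥ 0 :=
        mul_nonneg (by linarith) (by linarith)
      have h6 : ((d:ℝ)+1)*(Real.exp 1 - 2.71) ≥ 0 :=
        mul_nonneg (by linarith) (by linarith)
      nlinarith [hs1, h4, h5, h6, he, hdR]
    linarith
  · push_neg at hd10
    have hd11 : 11 ≤ d := hd10
    have hnat : n*(n-1) < 2^d := by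
      have h1 : n*(n-1) ≤ (2*d+1)*(2*d) := by
        apply Nat.mul_le_mul hn
        omega
      have := pow_helper d hd11
      nlinarith
    have hcast : ((n:ℝ)) * ((n:ℝ)-1) = ((n*(n-1) : ℕ) : ℝ) := by
      have h1 : (1:ℕ) ≤ n := by omega
      push_cast [Nat.cast_sub h1]
      ring
    have h2d : ((2:ℝ))^d ≤ 2 * (k:ℝ)^(d-1) := by
      have hsplit : ((2:ℝ))^d = 2 * (2:ℝ)^(d-1) := by
        rw [← pow_succ']
        congr 1
        omega
      rw [hsplit]
      have : ((2:ℝ))^(d-1) ≤ (k:ℝ)^(d-1) := by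
        apply pow_le_pow_left₀ (by norm_num)
        exact_mod_cast hk2
      linarith
    calc ((n:ℝ)) * ((n:ℝ)-1) = ((n*(n-1) : ℕ) : ℝ) := hcast
      _ < ((2:ℝ))^d := by exact_mod_cast hnat
      _ ≤ 2 * (k:ℝ)^(d-1) := h2d

section MainProof

set_option maxHeartbeats 1600000 in
open scoped Classical in
/-- If `G` is a nice `d`-regular graph on `n` vertices, `d ≥ 2`, then
`ls_σ^e(G) ≤ ⌈(2e(d+1)(n−d))^{1/(d−1)}⌉`: for every edge ordering and every assignment of
sets of that many reals to the edges, some weighting from the sets gives all vertices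
pairwise distinct induced sequences. -/
theorem stmt_16 [Fintype V] [DecidableEq V] (G : SimpleGraph V) [DecidableRel G.Adj]
    (d : ℕ) (hd : 2 ≤ d) (hreg : G.IsRegularOfDegree d) (hnice : Nice G)
    (σ : LinearOrder G.edgeSet)
    (L : G.edgeSet → Finset ℝ)
    (hL : ∀ e, (L e).card =
      ⌈(2 * Real.exp 1 * ((d : ℝ) + 1) * ((Fintype.card V : ℝ) - (d : ℝ)))
        ^ ((1 : ℝ) / ((d : ℝ) - 1))⌉₊) :
    ∃ w : G.edgeSet → ℝ, (∀ e, w e ∈ L e) ∧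
      ∀ u v : V, u ≠ v → seqColor G σ w u ≠ seqColor G σ w v := by
  obtain hV | hV := isEmpty_or_nonempty V
  · refine ⟨fun _ => 0, fun e => ?_, fun u => isEmptyElim u⟩
    exfalso
    obtain ⟨e, he⟩ := e
    induction e using Sym2.ind with
    | _ x y => exact isEmptyElim x
  -- main case
  set n := Fintype.card V with hn
  set X : ℝ := 2 * Real.exp 1 * ((d:ℝ)+1) * ((n:ℝ) - (d:ℝ)) with hXdef
  set k : ℕ := ⌈X ^ ((1:ℝ)/((d:ℝ)-1))⌉₊ with hkdef
  have hLk : ∀ e, (L e).card = k := hL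
  have hdn : d < n := by
    obtain ⟨v₀⟩ := hV
    have h := G.degree_lt_card_verts v₀
    rw [hreg v₀] at h
    exact h
  have he1 : (2:ℝ) ≤ Real.exp 1 := by
    have := Real.add_one_le_exp 1; linarith
  have hd1R : (1:ℝ) ≤ (d:ℝ) - 1 := by
    have : (2:ℝ) ≤ (d:ℝ) := by exact_mod_cast hd
    linarith
  have hnd1 : (1:ℝ) ≤ (n:ℝ) - (d:ℝ) := by
    have : (d:ℝ) + 1 ≤ (n:ℝ) := by exact_mod_cast hdn
    linarith
  have hX1 : (1:ℝ) < X := by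
    rw [hXdef]
    have h4 : (4:ℝ) ≤ 2*Real.exp 1 := by linarith
    have h3 : (3:ℝ) ≤ (d:ℝ)+1 := by linarith
    have hprod : (4:ℝ)*3*1 ≤ 2*Real.exp 1*((d:ℝ)+1)*((n:ℝ)-(d:ℝ)) := by
      apply mul_le_mul (mul_le_mul h4 h3 (by norm_num) (by linarith)) hnd1
        (by norm_num) (by positivity)
    linarith
  have hXpos : (0:ℝ) < X := by linarith
  have hk2 : 2 ≤ k := by
    rw [hkdef]
    have h1 : (1:ℝ) < X ^ ((1:ℝ)/((d:ℝ)-1)) := by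
      rw [Real.one_lt_rpow_iff_of_pos hXpos]
      left
      exact ⟨hX1, by positivity⟩
    have h2 := Nat.lt_ceil.mpr (show ((1:ℕ):ℝ) < X ^ ((1:ℝ)/((d:ℝ)-1)) by exact_mod_cast h1)
    omega
  have hk1 : 1 ≤ k := by omega
  have hkX : X ≤ (k:ℝ) ^ (d-1) := by
    have h0 : X ^ ((1:ℝ)/((d:ℝ)-1)) ≤ (k:ℝ) := Nat.le_ceil _
    have h2 : (X ^ ((1:ℝ)/((d:ℝ)-1))) ^ (d-1 : ℕ) ≤ (k:ℝ)^(d-1) :=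
      pow_le_pow_left₀ (Real.rpow_nonneg hXpos.le _) h0 _
    calc X = (X ^ ((1:ℝ)/((d:ℝ)-1))) ^ (d-1:ℕ) := by
          rw [← Real.rpow_natCast (X ^ ((1:ℝ)/((d:ℝ)-1))) (d-1), ← Real.rpow_mul hXpos.le]
          have hcast : ((d-1:ℕ):ℝ) = (d:ℝ) - 1 := by
            push_cast [Nat.cast_sub (show 1 ≤ d by omega)]
            ring
          rw [hcast, one_div, inv_mul_cancel₀ (by linarith : (d:ℝ) - 1 ≠ 0), Real.rpow_one]
      _ ≤ _ := h2
  have hkpos : (0:ℝ) < (k:ℝ)^(d-1) := by positivity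
  set p : ℝ := ((k:ℝ)^(d-1))⁻¹ with hpdef
  have hp0 : 0 ≤ p := by positivity
  -- events
  set bad : Sym2 V → (G.edgeSet → ℝ) → Prop :=
    fun j w => ∃ a b : V, a ≠ b ∧ j = s(a,b) ∧ seqColor G σ w a = seqColor G σ w b
    with hbaddef
  set vbl : Sym2 V → Finset G.edgeSet :=
    fun j => if j.IsDiag then (∅ : Finset G.edgeSet)
      else univ.filter (fun e : G.edgeSet => ∃ x ∈ (e : Sym2 V), x ∈ j) with hvbldef
  set Ω : Finset (G.edgeSet → ℝ) := Fintype.piFinset L with hΩdef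
  have hLne : ∀ e, (L e).Nonempty := by
    intro e
    rw [← Finset.card_pos, hLk e]
    omega
  have hΩpos : (0:ℝ) < (Ω.card : ℝ) := by
    have : Ω.Nonempty := by
      rw [hΩdef, Fintype.piFinset_nonempty]
      exact hLne
    exact_mod_cast this.card_pos
  -- probability bound for every event
  have hp_all : ∀ j : Sym2 V, ((Ω.filter (bad j)).card : ℝ) ≤ p * (Ω.card : ℝ) := by
    intro j
    by_cases hdiag : j.IsDiag
    · have hempty : Ω.filter (bad j) = ∅ := by
        apply Finset.filter_false_of_mem
        rintro w _ ⟨a, b, hab, rfl, -⟩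
        exact hab (Sym2.mk_isDiag_iff.mp hdiag)
      rw [hempty]
      simp only [Finset.card_empty, Nat.cast_zero]
      positivity
    · revert hdiag
      induction j using Sym2.ind with
      | _ u v =>
        intro hdiag
        have huv : u ≠ v := fun h => hdiag (Sym2.mk_isDiag_iff.mpr h)
        have heq : Ω.filter (bad s(u,v))
            = Ω.filter (fun w => seqColor G σ w u = seqColor G σ w v) := by
          apply Finset.filter_congr
          intro w _
          constructor
          · rintro ⟨a, b, hab, habeq, hseq⟩
            rcases Sym2.eq_iff.mp habeq.symm with ⟨ha, hb⟩ | ⟨ha, hb⟩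
            · rw [← ha, ← hb]; exact hseq
            · rw [← ha, ← hb]; exact hseq.symm
          · intro h
            exact ⟨u, v, huv, rfl, h⟩
        rw [heq]
        have hcnt := bad_count G σ L k hk1 hLk huv d (hreg u) (hreg v)
        have hcast : ((Ω.filter (fun w => seqColor G σ w u = seqColor G σ w v)).card : ℝ)
            * (k:ℝ)^(d-1) ≤ (Ω.card : ℝ) := by
          exact_mod_cast hcnt
        calc ((Ω.filter (fun w => seqColor G σ w u = seqColor G σ w v)).card : ℝ)
            ≤ (Ω.card : ℝ) / (k:ℝ)^(d-1) := (le_div_iff₀ hkpos).mpr hcast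
          _ = p * (Ω.card : ℝ) := by rw [hpdef]; ring
  -- the set of non-diagonal pairs
  set PairsND : Finset (Sym2 V) := univ.filter (fun j : Sym2 V => ¬ j.IsDiag)
    with hPairsdef
  -- extraction of a good weighting from "no bad event"
  have hextract : ∀ w : G.edgeSet → ℝ, w ∈ Ω → (∀ j : Sym2 V, ¬ bad j w) →
      (∀ e, w e ∈ L e) ∧ ∀ u v : V, u ≠ v → seqColor G σ w u ≠ seqColor G σ w v := by
    intro w hwΩ hgood
    constructor
    · intro e
      rw [hΩdef, Fintype.mem_piFinset] at hwΩ
      exact hwΩ e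
    · intro u v huv hseq
      exact hgood s(u,v) ⟨u, v, huv, rfl, hseq⟩
  by_cases hU : ((PairsND.card : ℝ)) < (k:ℝ)^(d-1)
  · -- union bound
    set BadAll : Finset (G.edgeSet → ℝ) :=
      Ω.filter (fun w => ∃ j : Sym2 V, bad j w) with hBadAlldef
    have hsub : BadAll ⊆ PairsND.biUnion (fun j => Ω.filter (bad j)) := by
      intro w hw
      rw [hBadAlldef, Finset.mem_filter] at hw
      obtain ⟨hwΩ, j, hj⟩ := hw
      apply Finset.mem_biUnion.mpr
      refine ⟨j, ?_, Finset.mem_filter.mpr ⟨hwΩ, hj⟩⟩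
      rw [hPairsdef, Finset.mem_filter]
      obtain ⟨a, b, hab, rfl, -⟩ := hj
      exact ⟨Finset.mem_univ _, fun h => hab (Sym2.mk_isDiag_iff.mp h)⟩
    have hcard : (BadAll.card : ℝ) < (Ω.card : ℝ) := by
      have h1 : BadAll.card ≤ ∑ j ∈ PairsND, (Ω.filter (bad j)).card :=
        le_trans (Finset.card_le_card hsub) (Finset.card_biUnion_le)
      have h2 : ((∑ j ∈ PairsND, (Ω.filter (bad j)).card : ℕ) : ℝ)
          ≤ (PairsND.card : ℝ) * (p * (Ω.card : ℝ)) := by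
        push_cast
        calc ∑ j ∈ PairsND, ((Ω.filter (bad j)).card : ℝ)
            ≤ ∑ _j ∈ PairsND, p * (Ω.card : ℝ) := Finset.sum_le_sum (fun j _ => hp_all j)
          _ = (PairsND.card : ℝ) * (p * (Ω.card : ℝ)) := by
              rw [Finset.sum_const, nsmul_eq_mul]
      have h3 : (PairsND.card : ℝ) * p < 1 := by
        rw [hpdef, mul_inv_lt_iff₀ hkpos, one_mul]
        exact hU
      calc (BadAll.card : ℝ) ≤ (PairsND.card : ℝ) * (p * (Ω.card : ℝ)) := by
            exact le_trans (by exact_mod_cast Nat.cast_le.mpr h1) h2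
        _ = ((PairsND.card : ℝ) * p) * (Ω.card : ℝ) := by ring
        _ < 1 * (Ω.card : ℝ) := mul_lt_mul_of_pos_right h3 hΩpos
        _ = (Ω.card : ℝ) := one_mul _
    have hdiff : (Ω \ BadAll).Nonempty := by
      rw [← Finset.card_pos]
      have hBsub : BadAll ⊆ Ω := Finset.filter_subset _ _
      rw [Finset.card_sdiff_of_subset hBsub]
      have hlt : BadAll.card < Ω.card := by exact_mod_cast hcard
      omega
    obtain ⟨w, hw⟩ := hdiff
    rw [Finset.mem_sdiff] at hw
    obtain ⟨hwΩ, hwb⟩ := hw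
    have hgood : ∀ j : Sym2 V, ¬ bad j w := by
      intro j hj
      exact hwb (Finset.mem_filter.mpr ⟨hwΩ, ⟨j, hj⟩⟩)
    obtain ⟨hmem, hdist⟩ := hextract w hwΩ hgood
    exact ⟨w, hmem, hdist⟩
  · -- LLL branch
    push_neg at hU
    -- first: n ≥ 2d+2
    have hn2d : 2*d+2 ≤ n := by
      by_contra hcon
      push_neg at hcon
      have hnle : n ≤ 2*d+1 := by omega
      have hdense := dense_numeric d n k hd hdn hnle hk2 hkX
      have hPairs : 2 * PairsND.card ≤ n * n - n := by
        have h := two_mul_card_le_offDiag (univ : Finset V) PairsND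
          (by
            intro j hj
            rw [hPairsdef, Finset.mem_filter] at hj
            exact ⟨hj.2, fun y _ => Finset.mem_univ y⟩)
        rw [Finset.card_univ, ← hn] at h
        exact h
      have hlt : (PairsND.card : ℝ) < (k:ℝ)^(d-1) := by
        have h1 : ((2 * PairsND.card : ℕ) : ℝ) ≤ ((n*n - n : ℕ) : ℝ) := by
          exact_mod_cast hPairs
        have hnn : n ≤ n * n := Nat.le_mul_of_pos_left n (by omega)
        have h2 : ((n*n - n : ℕ) : ℝ) = (n:ℝ) * ((n:ℝ) - 1) := by
          push_cast [Nat.cast_sub hnn]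
          ring
        have h3 : 2 * (PairsND.card : ℝ) ≤ (n:ℝ) * ((n:ℝ)-1) := by
          rw [← h2]
          exact_mod_cast h1
        linarith
      exact absurd hU (not_le.mpr hlt)
    set D : ℕ := 2*(d+1)*(n-d) with hDdef
    have hD1 : 1 ≤ D := by
      have h1 : 1 ≤ n - d := by omega
      calc 1 = 2*1*1 - 1 := by norm_num
        _ ≤ D := by rw [hDdef]; nlinarith
    have hDcast : (D:ℝ) = 2*((d:ℝ)+1)*((n:ℝ)-(d:ℝ)) := by
      rw [hDdef]
      push_cast [Nat.cast_sub hdn.le]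
      ring
    -- locality
    have hloc : ∀ (j : Sym2 V) (f g : G.edgeSet → ℝ),
        (∀ e ∈ vbl j, f e = g e) → (bad j f ↔ bad j g) := by
      have haux : ∀ (j : Sym2 V) (f g : G.edgeSet → ℝ),
          (∀ e ∈ vbl j, f e = g e) → bad j f → bad j g := by
        intro j f g hagree hbadf
        obtain ⟨a, b, hab, hjeq, hseq⟩ := hbadf
        subst hjeq
        have hdiag : ¬ (s(a,b)).IsDiag := fun h => hab (Sym2.mk_isDiag_iff.mp h)
        have hvblj : vbl s(a,b)
            = univ.filter (fun e : G.edgeSet => ∃ x ∈ (e : Sym2 V), x ∈ s(a,b)) := by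
          rw [hvbldef]
          simp only [if_neg hdiag]
        have hseqc : ∀ c : V, c ∈ s(a,b) → seqColor G σ f c = seqColor G σ g c := by
          intro c hc
          apply List.map_congr_left
          intro e he
          apply hagree
          rw [hvblj, Finset.mem_filter]
          exact ⟨Finset.mem_univ _, ⟨c, (incEdges_mem G σ c e).mp he, hc⟩⟩
        refine ⟨a, b, hab, rfl, ?_⟩
        rw [← hseqc a (Sym2.mem_mk_left a b), ← hseqc b (Sym2.mem_mk_right a b)]
        exact hseq
      intro j f g hagree
      exact ⟨haux j f g hagree, haux j g f (fun e he => (hagree e he).symm)⟩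
    -- dependency bound
    have hdep : ∀ j : Sym2 V,
        ((univ.filter fun j' => (vbl j ∩ vbl j').Nonempty).card) ≤ D := by
      intro j
      by_cases hdiag : j.IsDiag
      · have hfe : (univ.filter fun j' : Sym2 V => (vbl j ∩ vbl j').Nonempty) = ∅ := by
          apply Finset.filter_false_of_mem
          intro j' _
          rw [hvbldef]
          simp only [if_pos hdiag, Finset.empty_inter]
          exact Finset.not_nonempty_empty
        rw [hfe, Finset.card_empty]
        omega
      · revert hdiag
        induction j using Sym2.ind with
        | _ u v =>
          intro hdiag
          have huv : u ≠ v := fun h => hdiag (Sym2.mk_isDiag_iff.mpr h)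
          set S : Finset V :=
            insert u (insert v (G.neighborFinset u ∪ G.neighborFinset v)) with hSdef
          have hScard : S.card ≤ 2*d+2 := by
            calc S.card ≤ (insert v (G.neighborFinset u ∪ G.neighborFinset v)).card + 1 :=
                  Finset.card_insert_le _ _
              _ ≤ ((G.neighborFinset u ∪ G.neighborFinset v).card + 1) + 1 := by
                  have := Finset.card_insert_le v (G.neighborFinset u ∪ G.neighborFinset v)
                  omega
              _ ≤ ((G.neighborFinset u).card + (G.neighborFinset v).card + 1) + 1 := by
                  have := Finset.card_union_le (G.neighborFinset u) (G.neighborFinset v)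
                  omega
              _ ≤ 2*d+2 := by
                  rw [G.card_neighborFinset_eq_degree, G.card_neighborFinset_eq_degree,
                    hreg u, hreg v]
                  omega
          have hSn : S.card ≤ n := by
            rw [hn]
            exact Finset.card_le_univ S
          -- endpoints of edges in vbl j lie in S
          have hend : ∀ e : G.edgeSet, e ∈ vbl s(u,v) → ∀ y ∈ (e : Sym2 V), y ∈ S := by
            intro e he y hy
            have hvblj : e ∈ univ.filter
                (fun e : G.edgeSet => ∃ x ∈ (e : Sym2 V), x ∈ s(u,v)) := by
              rw [hvbldef] at he
              simpa only [if_neg hdiag] using he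
            rw [Finset.mem_filter] at hvblj
            obtain ⟨-, x, hxe, hxuv⟩ := hvblj
            have hxS : x ∈ S := by
              rcases Sym2.mem_iff.mp hxuv with h | h
              · rw [h, hSdef]; exact Finset.mem_insert_self _ _
              · rw [h, hSdef]
                exact Finset.mem_insert_of_mem (Finset.mem_insert_self _ _)
            by_cases hyx : y = x
            · rw [hyx]; exact hxS
            · have hedge : (e : Sym2 V) = s(x, y) :=
                (Sym2.mem_and_mem_iff (fun h => hyx h.symm)).mp ⟨hxe, hy⟩
              have hadj : G.Adj x y := by
                rw [← SimpleGraph.mem_edgeSet, ← hedge]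
                exact e.2
              have hyN : ∀ z : V, x = z → y ∈ G.neighborFinset z := by
                intro z hz
                rw [SimpleGraph.mem_neighborFinset, ← hz]
                exact hadj
              rcases Sym2.mem_iff.mp hxuv with h | h
              · rw [hSdef]
                exact Finset.mem_insert_of_mem (Finset.mem_insert_of_mem
                  (Finset.mem_union_left _ (hyN u h)))
              · rw [hSdef]
                exact Finset.mem_insert_of_mem (Finset.mem_insert_of_mem
                  (Finset.mem_union_right _ (hyN v h)))
          set Aset : Finset (Sym2 V) :=
            (S ×ˢ ((univ : Finset V) \ S)).image (fun q : V × V => s(q.1, q.2))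
            with hAdef
          set B : Finset (Sym2 V) :=
            univ.filter (fun j' : Sym2 V => ¬ j'.IsDiag ∧ ∀ y ∈ j', y ∈ S) with hBdef
          have hGsub : (univ.filter fun j' => (vbl s(u,v) ∩ vbl j').Nonempty)
              ⊆ Aset ∪ B := by
            intro j' hj'
            rw [Finset.mem_filter] at hj'
            obtain ⟨-, e, hee⟩ := hj'
            rw [Finset.mem_inter] at hee
            obtain ⟨hej, hej'⟩ := hee
            have hj'nd : ¬ j'.IsDiag := by
              intro hdiag'
              rw [hvbldef] at hej'
              simp only [if_pos hdiag'] at hej'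
              exact absurd hej' (Finset.notMem_empty e)
            have hej'2 : ∃ y ∈ (e : Sym2 V), y ∈ j' := by
              rw [hvbldef] at hej'
              simp only [if_neg hj'nd, Finset.mem_filter] at hej'
              exact hej'.2
            obtain ⟨y, hye, hyj'⟩ := hej'2
            have hyS : y ∈ S := hend e hej y hye
            obtain ⟨z, rfl⟩ := Sym2.mem_iff_exists.mp hyj'
            have hyz : y ≠ z := fun h => hj'nd (Sym2.mk_isDiag_iff.mpr h)
            by_cases hzS : z ∈ S
            · apply Finset.mem_union_right
              rw [hBdef, Finset.mem_filter]
              refine ⟨Finset.mem_univ _, hj'nd, ?_⟩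
              intro y' hy'
              rcases Sym2.mem_iff.mp hy' with h | h
              · rw [h]; exact hyS
              · rw [h]; exact hzS
            · apply Finset.mem_union_left
              rw [hAdef]
              apply Finset.mem_image.mpr
              exact ⟨(y, z), Finset.mem_product.mpr
                ⟨hyS, Finset.mem_sdiff.mpr ⟨Finset.mem_univ _, hzS⟩⟩, rfl⟩
          have hAcard : Aset.card ≤ S.card * (n - S.card) := by
            calc Aset.card ≤ (S ×ˢ ((univ : Finset V) \ S)).card := Finset.card_image_le
              _ = S.card * (n - S.card) := by
                  rw [Finset.card_product, Finset.card_sdiff_of_subset (Finset.subset_univ S),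
                    Finset.card_univ, ← hn]
          have hBcard : 2 * B.card ≤ S.card * S.card - S.card := by
            apply two_mul_card_le_offDiag
            intro j' hj'
            rw [hBdef, Finset.mem_filter] at hj'
            exact hj'.2
          -- final counting
          have hG1 : (univ.filter fun j' => (vbl s(u,v) ∩ vbl j').Nonempty).card
              ≤ Aset.card + B.card :=
            le_trans (Finset.card_le_card hGsub) (Finset.card_union_le _ _)
          have hss : S.card ≤ S.card * S.card := by nlinarith [S.card.zero_le]
          have hnum : 2 * (S.card * (n - S.card)) + (S.card * S.card - S.card)
              ≤ 2 * D := by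
            have hcast1 : ((n - S.card : ℕ) : ℝ) = (n:ℝ) - (S.card:ℝ) := by
              push_cast [Nat.cast_sub hSn]
              ring
            have hcast2 : ((S.card * S.card - S.card : ℕ) : ℝ)
                = (S.card:ℝ)*(S.card:ℝ) - (S.card:ℝ) := by
              push_cast [Nat.cast_sub hss]
              ring
            have hreal : 2 * ((S.card:ℝ) * ((n:ℝ) - S.card))
                + ((S.card:ℝ)*(S.card:ℝ) - (S.card:ℝ)) ≤ 2 * (D:ℝ) := by
              rw [hDcast]
              have hsR : (S.card : ℝ) ≤ 2*(d:ℝ)+2 := by exact_mod_cast hScard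
              have hnR : 2*(d:ℝ)+2 ≤ (n:ℝ) := by exact_mod_cast hn2d
              have hsnR : (S.card:ℝ) ≤ (n:ℝ) := by exact_mod_cast hSn
              rcases eq_or_lt_of_le hScard with hcase | hcase
              · have hsR' : (S.card : ℝ) = 2*(d:ℝ)+2 := by exact_mod_cast hcase
                rw [hsR']
                nlinarith [hnR, hd1R]
              · have hsR' : (S.card : ℝ) ≤ 2*(d:ℝ)+1 := by
                  have : S.card ≤ 2*d+1 := by omega
                  exact_mod_cast this
                nlinarith [mul_nonneg
                  (by linarith : (0:ℝ) ≤ (2*(d:ℝ)+2) - (S.card:ℝ))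
                  (by linarith : (0:ℝ) ≤ 2*(n:ℝ) - 1 - (S.card:ℝ) - (2*(d:ℝ)+2)),
                  hnR, hd1R]
            have : (2 * (S.card * (n - S.card)) + (S.card * S.card - S.card) : ℕ)
                ≤ (2 * D : ℕ) := by
              have hcast3 : ((2 * (S.card * (n - S.card))
                  + (S.card * S.card - S.card) : ℕ) : ℝ) ≤ ((2 * D : ℕ) : ℝ) := by
                push_cast [hcast1, hcast2]
                push_cast at hreal
                linarith
              exact_mod_cast hcast3
            exact this
          omega
    -- the numeric condition of the LLL
    have heD : Real.exp 1 * p * (D:ℝ) ≤ 1 := by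
      rw [hpdef, hDcast]
      have hXD : Real.exp 1 * ((k:ℝ)^(d-1))⁻¹ * (2*((d:ℝ)+1)*((n:ℝ)-(d:ℝ)))
          = X / (k:ℝ)^(d-1) := by
        rw [hXdef]
        field_simp
      rw [hXD, div_le_one hkpos]
      exact hkX
    obtain ⟨w, hwΩ, hgood⟩ := LLL_counting L hLne bad vbl hloc p hp0 D hD1 hp_all hdep heD
    obtain ⟨hmem, hdist⟩ := hextract w hwΩ hgood
    exact ⟨w, hmem, hdist⟩

end MainProof
end AuxLLL
end

section
/- Let G be a d-regular finite simple graph on n vertices with d ≥ 2. Then ls_σ^t(G) ≤ ⌈(2e(d+1)(n−d))^{1/d}⌉, where e is Euler's number: for k = ⌈(2e(d+1)(n−d))^{1/d}⌉, for every linear order on the disjoint union V(G) ∪ E(G) and every assignment to each vertex and each edge of a set of k real numbers, there exists a total weighting taking each weight from its assigned set such that all vertices of G receive pairwise distinct induced total sequences. -/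
/-!
Common definitions: total sequence colourings induced by a total weighting and a linear
order on the disjoint union `V(G) ⊕ E(G)` of a finite simple graph.
-/

open Finset

variable {V : Type*}

/-- The elements of `V(G) ⊕ E(G)` relevant to the vertex `v` (namely `v` itself together
with the edges incident to `v`), sorted in increasing order with respect to the linear
order `σ` on `V(G) ⊕ E(G)`. -/
noncomputable def incTotal [Fintype V] [DecidableEq V] (G : SimpleGraph V) [DecidableRel G.Adj]
    (σ : LinearOrder (V ⊕ G.edgeSet)) (v : V) : List (V ⊕ G.edgeSet) :=
  letI := σ
  letI : DecidablePred (fun x : V ⊕ G.edgeSet =>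
      Sum.elim (fun u : V => u = v) (fun e : G.edgeSet => v ∈ (e : Sym2 V)) x) :=
    Classical.decPred _
  ((Finset.univ : Finset (V ⊕ G.edgeSet)).filter
    (fun x : V ⊕ G.edgeSet =>
      Sum.elim (fun u : V => u = v) (fun e : G.edgeSet => v ∈ (e : Sym2 V)) x)).sort σ.le

/-- The induced total sequence colouring: `c(v)` consists of `w(v)` together with the
weights `w(e)` of the edges `e` incident to `v`, all written in increasing order with
respect to `σ`. -/
noncomputable def totalSeqColor [Fintype V] [DecidableEq V] (G : SimpleGraph V)
    [DecidableRel G.Adj] (σ : LinearOrder (V ⊕ G.edgeSet)) (w : V ⊕ G.edgeSet → ℝ) (v : V) :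
    List ℝ :=
  (incTotal G σ v).map w

/-- The induced total sequence colouring is proper: adjacent vertices receive distinct
sequences. -/
def ProperTotalSeq [Fintype V] [DecidableEq V] (G : SimpleGraph V) [DecidableRel G.Adj]
    (σ : LinearOrder (V ⊕ G.edgeSet)) (w : V ⊕ G.edgeSet → ℝ) : Prop :=
  ∀ u v : V, G.Adj u v → totalSeqColor G σ w u ≠ totalSeqColor G σ w v

/-! ### Auxiliary material: a counting version of the Lovász Local Lemma -/

set_option maxHeartbeats 1000000

private theorem lll_count {κ α ι : Type*} [Fintype κ] [DecidableEq κ] [Fintype ι] [DecidableEq ι]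
    (L : κ → Finset α) (A : ι → Finset (κ → α)) (T : ι → Finset κ) (D : ℕ) (p : ℝ)
    (hΩpos : 0 < (Fintype.piFinset L).card)
    (hdet : ∀ i, ∀ w ∈ A i, w ∈ Fintype.piFinset L ∧
      ∀ w' ∈ Fintype.piFinset L, (∀ x ∈ T i, w' x = w x) → w' ∈ A i)
    (hTi : ∀ i, (T i).Nonempty)
    (hp : ∀ i, ((A i).card : ℝ) ≤ p * (Fintype.piFinset L).card)
    (hD : 2 ≤ D)
    (hdep : ∀ i, (univ.filter (fun j => ¬ Disjoint (T i) (T j))).card ≤ D)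
    (hpD : p ≤ (1 - 1/D)^(D-1) / D) :
    ∃ w ∈ Fintype.piFinset L, ∀ i, w ∉ A i := by
  classical
  set Ω := Fintype.piFinset L with hΩ
  set x : ℝ := 1/D with hx
  have hDpos : (0:ℝ) < D := by positivity
  have hxhalf : x ≤ 1/2 := by
    rw [hx]; apply div_le_div_of_nonneg_left <;> [norm_num; norm_num; exact_mod_cast hD]
  have h1x : 0 < 1 - x := by linarith
  have hxpos : 0 < x := by positivity
  have hx01 : 0 ≤ 1 - x ∧ 1 - x < 1 := ⟨by linarith, by linarith⟩
  set good : Finset ι → Finset (κ → α) := fun S => Ω.filter (fun w => ∀ i ∈ S, w ∉ A i)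
    with hgood
  -- independence
  have hind : ∀ (i : ι) (S : Finset ι), (∀ j ∈ S, Disjoint (T i) (T j)) →
      ((good S).filter (· ∈ A i)).card * Ω.card = (A i).card * (good S).card := by
    intro i S hS
    have hmerge : ∀ a b : κ → α, a ∈ Ω → b ∈ Ω →
        (fun y => if y ∈ T i then a y else b y) ∈ Ω := by
      intro a b ha hb
      rw [Fintype.mem_piFinset] at *
      intro y
      show (if y ∈ T i then a y else b y) ∈ L y
      split <;> [exact ha y; exact hb y]
    have hAmem : ∀ a b : κ → α, a ∈ A i → b ∈ Ω →
        (fun y => if y ∈ T i then a y else b y) ∈ A i := by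
      intro a b ha hb
      exact (hdet i a ha).2 _ (hmerge a b ((hdet i a ha).1) hb)
        (fun y hy => if_pos hy)
    have hGmem : ∀ a b : κ → α, a ∈ Ω → b ∈ good S →
        (fun y => if y ∈ T i then a y else b y) ∈ good S := by
      intro a b ha hb
      rw [hgood, mem_filter] at hb ⊢
      refine ⟨hmerge a b ha hb.1, fun j hj hmem => hb.2 j hj ?_⟩
      refine (hdet j _ hmem).2 b hb.1 (fun y hy => ?_)
      have hni : y ∉ T i := fun hyi => (Finset.disjoint_left.mp (hS j hj)) hyi hy
      exact (if_neg hni).symm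
    have := Finset.card_bij'
      (s := ((good S).filter (· ∈ A i)) ×ˢ Ω) (t := (A i) ×ˢ (good S))
      (fun wuv _ => (fun y => if y ∈ T i then wuv.1 y else wuv.2 y,
                     fun y => if y ∈ T i then wuv.2 y else wuv.1 y))
      (fun ag _ => (fun y => if y ∈ T i then ag.1 y else ag.2 y,
                    fun y => if y ∈ T i then ag.2 y else ag.1 y))
      ?_ ?_ ?_ ?_
    · rw [Finset.card_product, Finset.card_product] at this
      exact this
    · rintro ⟨w, u⟩ h
      rw [Finset.mem_product] at h ⊢
      obtain ⟨hw, hu⟩ := h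
      rw [mem_filter] at hw
      obtain ⟨hwg, hwA⟩ := hw
      have hwΩ : w ∈ Ω := (mem_filter.mp hwg).1
      exact ⟨hAmem w u hwA hu, hGmem u w hu hwg⟩
    · rintro ⟨a, g⟩ h
      rw [Finset.mem_product] at h ⊢
      obtain ⟨ha, hg⟩ := h
      have hgΩ : g ∈ Ω := (mem_filter.mp hg).1
      have haΩ : a ∈ Ω := (hdet i a ha).1
      refine ⟨mem_filter.mpr ⟨hGmem a g haΩ hg, hAmem a g ha hgΩ⟩, hmerge g a hgΩ haΩ⟩
    · rintro ⟨w, u⟩ h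
      refine Prod.ext ?_ ?_ <;> funext y <;>
      · show (if y ∈ T i then (if y ∈ T i then _ else _) else (if y ∈ T i then _ else _)) = _
        by_cases hy : y ∈ T i <;> simp [hy]
    · rintro ⟨a, g⟩ h
      refine Prod.ext ?_ ?_ <;> funext y <;>
      · show (if y ∈ T i then (if y ∈ T i then _ else _) else (if y ∈ T i then _ else _)) = _
        by_cases hy : y ∈ T i <;> simp [hy]
  -- main induction
  have key : ∀ (N : ℕ) (S : Finset ι) (i : ι), S.card ≤ N → i ∉ S →
      (1 - x) * ((good S).card : ℝ) ≤ ((good (insert i S)).card : ℝ) := by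
    intro N
    induction N using Nat.strong_induction_on with
    | _ N IH =>
      intro S i hcard hi
      set S₁ := S.filter (fun j => ¬ Disjoint (T i) (T j)) with hS₁
      set S₂ := S.filter (fun j => Disjoint (T i) (T j)) with hS₂
      have hUnion : S₂ ∪ S₁ = S := by
        rw [hS₁, hS₂]
        exact Finset.filter_union_filter_not_eq _ S
      have chain : ∀ B : Finset ι, B ⊆ S₁ →
          (1 - x) ^ B.card * ((good S₂).card : ℝ) ≤ ((good (S₂ ∪ B)).card : ℝ) := by
        intro B
        induction B using Finset.induction_on with
        | empty => intro _; simp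
        | @insert a B ha hIH =>
          intro hsub
          have haS₁ : a ∈ S₁ := hsub (Finset.mem_insert_self a B)
          have hBsub : B ⊆ S₁ := fun b hb => hsub (Finset.mem_insert_of_mem hb)
          have haS : a ∈ S := (Finset.mem_filter.mp haS₁).1
          have hanotin : a ∉ S₂ ∪ B := by
            simp only [Finset.mem_union]
            rintro (h2 | h2)
            · exact (Finset.mem_filter.mp haS₁).2 (Finset.mem_filter.mp h2).2
            · exact ha h2
          have hsubS : S₂ ∪ B ⊆ S.erase a := by
            intro b hb
            rw [Finset.mem_erase]
            rcases Finset.mem_union.mp hb with h | h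
            · exact ⟨fun he => hanotin (he ▸ hb), (Finset.mem_filter.mp h).1⟩
            · exact ⟨fun he => hanotin (he ▸ hb), (Finset.mem_filter.mp (hBsub h)).1⟩
          have hcard2 : (S₂ ∪ B).card < N := by
            calc (S₂ ∪ B).card ≤ (S.erase a).card := Finset.card_le_card hsubS
            _ < S.card := Finset.card_erase_lt_of_mem haS
            _ ≤ N := hcard
          have hstep := IH (S₂ ∪ B).card hcard2 (S₂ ∪ B) a le_rfl hanotin
          rw [Finset.union_insert] at *
          calc (1-x) ^ (insert a B).card * ((good S₂).card:ℝ)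
              ≤ (1-x) * ((1-x) ^ B.card * ((good S₂).card:ℝ)) := by
                rw [Finset.card_insert_of_notMem ha]; ring_nf; exact le_refl _
            _ ≤ (1-x) * ((good (S₂ ∪ B)).card : ℝ) := by
                apply mul_le_mul_of_nonneg_left (hIH hBsub) hx01.1
            _ ≤ _ := hstep
      have hS₁card : S₁.card + 1 ≤ D := by
        have hins : insert i S₁ ⊆ univ.filter (fun j => ¬ Disjoint (T i) (T j)) := by
          intro b hb
          rcases Finset.mem_insert.mp hb with rfl | hb
          · simp only [Finset.mem_filter, Finset.mem_univ, true_and]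
            intro hdisj
            obtain ⟨y, hy⟩ := hTi b
            exact (Finset.disjoint_left.mp hdisj) hy hy
          · exact Finset.mem_filter.mpr ⟨Finset.mem_univ _, (Finset.mem_filter.mp hb).2⟩
        have : (insert i S₁).card ≤ D := le_trans (Finset.card_le_card hins) (hdep i)
        rwa [Finset.card_insert_of_notMem (fun h => hi (Finset.mem_filter.mp h).1)] at this
      have hgsub : good (insert i S) = (good S).filter (· ∉ A i) := by
        rw [hgood]; rw [Finset.filter_filter]
        apply Finset.filter_congr
        intro w _
        simp only [Finset.mem_insert]
        constructor
        · intro h; exact ⟨fun j hj => h j (Or.inr hj), h i (Or.inl rfl)⟩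
        · rintro ⟨h1, h2⟩ j (rfl | hj); exact h2; exact h1 j hj
      have hcardsplit : ((good S).filter (· ∈ A i)).card + (good (insert i S)).card
          = (good S).card := by
        rw [hgsub]
        exact Finset.card_filter_add_card_filter_not _
      have hfsub : (good S).filter (· ∈ A i) ⊆ (good S₂).filter (· ∈ A i) := by
        apply Finset.filter_subset_filter
        intro w hw
        have hw' := Finset.mem_filter.mp hw
        exact Finset.mem_filter.mpr
          ⟨hw'.1, fun j hj => hw'.2 j ((Finset.mem_filter.mp hj).1)⟩
      have hind2 := hind i S₂ (fun j hj => (Finset.mem_filter.mp hj).2)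
      have hfilter2 : (((good S₂).filter (· ∈ A i)).card : ℝ) ≤ p * ((good S₂).card:ℝ) := by
        have h1 : (((good S₂).filter (· ∈ A i)).card : ℝ) * (Ω.card:ℝ)
            = ((A i).card:ℝ) * ((good S₂).card:ℝ) := by exact_mod_cast hind2
        have h2 : ((A i).card:ℝ) * ((good S₂).card:ℝ)
            ≤ (p * (Ω.card:ℝ)) * ((good S₂).card:ℝ) :=
          mul_le_mul_of_nonneg_right (hp i) (by positivity)
        have hΩ' : (0:ℝ) < (Ω.card:ℝ) := by exact_mod_cast hΩpos
        nlinarith [h1, h2, hΩ']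
      have hchainS := chain S₁ le_rfl.subset
      rw [hUnion] at hchainS
      have hple : p ≤ x * (1-x)^S₁.card := by
        calc p ≤ (1-x)^(D-1)/D := hpD
          _ ≤ (1-x)^S₁.card / D := by
              have hpow : (1-x)^(D-1) ≤ (1-x)^S₁.card :=
                pow_le_pow_of_le_one hx01.1 (by linarith [hx01.2]) (by omega)
              gcongr
          _ = x * (1-x)^S₁.card := by rw [hx]; ring
      have hfinal : (((good S).filter (· ∈ A i)).card : ℝ) ≤ x * ((good S).card:ℝ) := by
        calc (((good S).filter (· ∈ A i)).card : ℝ)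
            ≤ (((good S₂).filter (· ∈ A i)).card : ℝ) := by
              exact_mod_cast Finset.card_le_card hfsub
          _ ≤ p * ((good S₂).card:ℝ) := hfilter2
          _ ≤ (x * (1-x)^S₁.card) * ((good S₂).card:ℝ) :=
              mul_le_mul_of_nonneg_right hple (by positivity)
          _ = x * ((1-x)^S₁.card * ((good S₂).card:ℝ)) := by ring
          _ ≤ x * ((good S).card:ℝ) := mul_le_mul_of_nonneg_left hchainS (le_of_lt hxpos)
      have hcast : (((good S).filter (· ∈ A i)).card : ℝ) + ((good (insert i S)).card:ℝ)
          = ((good S).card : ℝ) := by exact_mod_cast hcardsplit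
      linarith
  have pos : ∀ S : Finset ι, 0 < ((good S).card : ℝ) := by
    intro S
    induction S using Finset.induction_on with
    | empty =>
      have : good ∅ = Ω := by
        rw [hgood]; apply Finset.filter_true_of_mem; simp
      rw [this]; exact_mod_cast hΩpos
    | @insert a B ha hIH =>
      have hk := key B.card B a le_rfl ha
      exact lt_of_lt_of_le (mul_pos h1x hIH) hk
  have huniv := pos Finset.univ
  have : (good Finset.univ).Nonempty := Finset.card_pos.mp (by exact_mod_cast huniv)
  obtain ⟨w, hw⟩ := this
  rw [hgood, Finset.mem_filter] at hw
  exact ⟨w, hw.1, fun i => hw.2 i (Finset.mem_univ i)⟩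

private lemma card_det {κ α : Type*} [Fintype κ] [DecidableEq κ]
    (L : κ → Finset α) (B : Finset (κ → α)) (F : Finset κ) (k : ℕ)
    (hB : B ⊆ Fintype.piFinset L)
    (hk : ∀ x, (L x).card = k)
    (hdet : ∀ w1 ∈ B, ∀ w2 ∈ B, (∀ x, x ∉ F → w1 x = w2 x) → w1 = w2) :
    B.card * k ^ F.card ≤ k ^ Fintype.card κ := by
  classical
  rcases B.eq_empty_or_nonempty with rfl | ⟨w₀, hw₀⟩
  · simp
  · set L' : κ → Finset α := fun x => if x ∈ F then {w₀ x} else L x with hL'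
    have hmap : ∀ w ∈ B, (fun x => if x ∈ F then w₀ x else w x) ∈ Fintype.piFinset L' := by
      intro w hw
      rw [Fintype.mem_piFinset]
      intro x
      by_cases hx : x ∈ F
      · simp [hL', hx]
      · simp only [hL', hx, if_neg, if_false]
        exact Fintype.mem_piFinset.mp (hB hw) x
    have hcard : B.card ≤ (Fintype.piFinset L').card := by
      apply Finset.card_le_card_of_injOn
        (fun (w : κ → α) (x : κ) => if x ∈ F then w₀ x else w x) hmap
      intro w hw w' hw' h
      apply hdet w hw w' hw'
      intro x hx
      have := congrFun h x
      simpa [if_neg hx] using this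
    have hcardL' : (Fintype.piFinset L').card = k ^ (Fintype.card κ - F.card) := by
      rw [Fintype.card_piFinset]
      calc ∏ x, (L' x).card = ∏ x, (if x ∈ F then 1 else k) := by
            apply Finset.prod_congr rfl
            intro x _
            by_cases hx : x ∈ F <;> simp [hL', hx, hk x]
        _ = (∏ _x ∈ univ.filter (· ∈ F), 1) *
            (∏ _x ∈ univ.filter (fun x => ¬ x ∈ F), k) := Finset.prod_ite _ _
        _ = k ^ (univ.filter (fun x => ¬ x ∈ F)).card := by
            rw [Finset.prod_const_one, Finset.prod_const, one_mul]
        _ = k ^ (Fintype.card κ - F.card) := by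
            congr 1
            have : univ.filter (fun x => ¬ x ∈ F) = univ \ F := by
              ext y; simp
            rw [this, Finset.card_sdiff_of_subset (Finset.subset_univ F), Finset.card_univ]
    have hFle : F.card ≤ Fintype.card κ := by
      rw [← Finset.card_univ]; exact Finset.card_le_card (Finset.subset_univ F)
    calc B.card * k ^ F.card ≤ k ^ (Fintype.card κ - F.card) * k ^ F.card := by
          apply Nat.mul_le_mul_right
          rw [← hcardL']; exact hcard
      _ = k ^ (Fintype.card κ - F.card + F.card) := (pow_add k _ _).symm
      _ = k ^ Fintype.card κ := by rw [Nat.sub_add_cancel hFle]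

private lemma choose_add_two (a b : ℕ) :
    (a + b).choose 2 = a.choose 2 + a * b + b.choose 2 := by
  induction b with
  | zero => simp
  | succ b ih =>
    have h1 : a + (b+1) = (a+b) + 1 := by omega
    rw [h1]
    have h2 : ((a+b)+1).choose 2 = (a+b).choose 1 + (a+b).choose 2 :=
      Nat.choose_succ_succ (a+b) 1
    have h3 : (b+1).choose 2 = b.choose 1 + b.choose 2 := Nat.choose_succ_succ b 1
    rw [h2, h3, Nat.choose_one_right, Nat.choose_one_right, ih]
    ring

private lemma key3 : ∀ m : ℕ, 5 ≤ m → 3*((2*(m:ℝ)-3)*((m:ℝ)-2)) ≤ 3^m := by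
  intro m hm
  induction m with
  | zero => omega
  | succ m ih =>
    rcases Nat.lt_or_ge m 5 with h | h
    · have : m = 4 := by omega
      subst this; norm_num
    · have ihm := ih h
      have hm5 : (5:ℝ) ≤ (m:ℝ) := by exact_mod_cast h
      push_cast
      have h3 : (3:ℝ)^(m+1) = 3 * 3^m := by ring
      rw [h3]
      nlinarith [ihm, hm5]

private lemma key2 : ∀ m : ℕ, 8 ≤ m → 2.7182818286*((2*(m:ℝ)-3)*((m:ℝ)-2)) ≤ 2^m := by
  intro m hm
  induction m with
  | zero => omega
  | succ m ih =>
    rcases Nat.lt_or_ge m 8 with h | h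
    · have : m = 7 := by omega
      subst this; norm_num
    · have ihm := ih h
      have hm8 : (8:ℝ) ≤ (m:ℝ) := by exact_mod_cast h
      push_cast
      have h2 : (2:ℝ)^(m+1) = 2 * 2^m := by ring
      rw [h2]
      nlinarith [ihm, hm8]

private lemma num_main (d n : ℕ) (hd : 2 ≤ d) (hn : d + 1 ≤ n) :
    2 ≤ n.choose 2 - (n - (2*d+2)).choose 2 ∧
    2 ≤ ⌈(2 * Real.exp 1 * ((d : ℝ) + 1) * ((n : ℝ) - (d : ℝ))) ^ ((1 : ℝ) / (d : ℝ))⌉₊ ∧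
    Real.exp 1 * ((n.choose 2 - (n - (2*d+2)).choose 2 : ℕ) : ℝ)
      ≤ ((⌈(2 * Real.exp 1 * ((d : ℝ) + 1) * ((n : ℝ) - (d : ℝ))) ^ ((1 : ℝ) / (d : ℝ))⌉₊ : ℝ))^d := by
  have he1 : (2.7182818283:ℝ) < Real.exp 1 := Real.exp_one_gt_d9
  have he2 : Real.exp 1 < 2.7182818286 := Real.exp_one_lt_d9
  set X : ℝ := 2 * Real.exp 1 * ((d : ℝ) + 1) * ((n : ℝ) - (d : ℝ)) with hX
  set k : ℕ := ⌈X ^ ((1 : ℝ) / (d : ℝ))⌉₊ with hk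
  set D : ℕ := n.choose 2 - (n - (2*d+2)).choose 2 with hD
  have hnd : (1:ℝ) ≤ (n:ℝ) - d := by
    have : ((d:ℝ)+1) ≤ (n:ℝ) := by exact_mod_cast hn
    linarith
  have hdr : (2:ℝ) ≤ (d:ℝ) := by exact_mod_cast hd
  have hXpos : 0 < X := by
    rw [hX]
    have h3 : (0:ℝ) < 2*Real.exp 1*((d:ℝ)+1) := by positivity
    nlinarith [h3, hnd]
  have hX1 : 1 < X := by
    have : (1:ℝ) ≤ 2 * Real.exp 1 * ((d:ℝ)+1) := by nlinarith [Real.exp_pos 1]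
    nlinarith
  have hdR : (0:ℝ) < (d:ℝ) := by positivity
  have hinv : (1:ℝ)/(d:ℝ) * (d:ℝ) = 1 := by field_simp
  have hkd : X ≤ (k:ℝ)^d := by
    have h1 : X ^ ((1:ℝ)/(d:ℝ)) ≤ (k:ℝ) := Nat.le_ceil _
    calc X = (X ^ ((1:ℝ)/(d:ℝ)))^(d:ℕ) := by
            rw [← Real.rpow_natCast (X ^ ((1:ℝ)/(d:ℝ))) d, ← Real.rpow_mul hXpos.le]
            rw [hinv, Real.rpow_one]
      _ ≤ (k:ℝ)^d := by
            apply pow_le_pow_left₀ (Real.rpow_nonneg hXpos.le _) h1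
  have hk2 : 2 ≤ k := by
    have h1 : (1:ℝ) < X ^ ((1:ℝ)/(d:ℝ)) := by
      rw [Real.one_lt_rpow_iff_of_pos hXpos]
      left; exact ⟨hX1, by positivity⟩
    have := Nat.lt_ceil.mpr (by exact_mod_cast h1 : ((1:ℕ):ℝ) < X ^ ((1:ℝ)/(d:ℝ)))
    omega
  have hk3 : (2:ℝ)^(d:ℕ) < X → 3 ≤ k := by
    intro h
    have h2 : (2:ℝ) < X ^ ((1:ℝ)/(d:ℝ)) := by
      have := Real.rpow_lt_rpow (by positivity) h (by positivity : (0:ℝ) < 1/(d:ℝ))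
      rwa [← Real.rpow_natCast 2 d, ← Real.rpow_mul (by norm_num),
        mul_one_div, div_self (ne_of_gt hdR), Real.rpow_one] at this
    have := Nat.lt_ceil.mpr (by exact_mod_cast h2 : ((2:ℕ):ℝ) < X ^ ((1:ℝ)/(d:ℝ)))
    omega
  have hn3 : 3 ≤ n := by omega
  rcases le_or_gt n (2*d+2) with hcase | hcase
  · have hD0 : D = n.choose 2 := by
      rw [hD]
      have : n - (2*d+2) = 0 := by omega
      rw [this]; simp
    have hD2 : 2 ≤ D := by
      rw [hD0]
      calc 2 ≤ (3).choose 2 := by norm_num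
        _ ≤ n.choose 2 := Nat.choose_le_choose 2 hn3
    refine ⟨hD2, hk2, ?_⟩
    have hDr : ((D:ℕ):ℝ) = (n:ℝ) * ((n:ℝ)-1) / 2 := by
      rw [hD0, Nat.cast_choose_two]
    rw [hDr]
    rcases le_or_gt ((n:ℝ) * ((n:ℝ)-1)) (4*((d:ℝ)+1)*((n:ℝ)-d)) with hq | hq
    · calc Real.exp 1 * ((n:ℝ) * ((n:ℝ)-1) / 2) ≤ X := by
            rw [hX]; nlinarith [Real.exp_pos 1]
        _ ≤ (k:ℝ)^d := hkd
    · have hnr : (n:ℝ) ≤ 2*(d:ℝ)+2 := by exact_mod_cast hcase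
      have hnr1 : (d:ℝ)+1 ≤ (n:ℝ) := by exact_mod_cast hn
      have hsmall : (n:ℝ) + 3 ≤ 2*(d:ℝ) := by
        by_contra hcon
        push_neg at hcon
        nlinarith [hq, hnr, hnr1, hdr]
      have hsn : n + 3 ≤ 2*d := by
        have : ((n:ℝ)+3) ≤ ((2*d:ℕ):ℝ) := by push_cast; linarith
        exact_mod_cast (by exact_mod_cast this : ((n+3:ℕ):ℝ) ≤ ((2*d:ℕ):ℝ))
      have hd5 : 5 ≤ d := by
        rcases Nat.lt_or_ge d 5 with h5 | h5
        · exfalso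
          have hd4' : d = 4 := by omega
          subst hd4'
          have hn5 : n = 5 := by omega
          subst hn5
          norm_num at hq
        · exact h5
      have hd5r : (5:ℝ) ≤ (d:ℝ) := by exact_mod_cast hd5
      have hbound : (n:ℝ) * ((n:ℝ)-1) / 2 ≤ (2*(d:ℝ)-3)*((d:ℝ)-2) := by
        nlinarith [hsmall, hnr1]
      rcases le_or_gt X ((2:ℝ)^(d:ℕ)) with hX2 | hX2
      · have hk2d : (2:ℝ)^(d:ℕ) ≤ (k:ℝ)^d := by
          apply pow_le_pow_left₀ (by norm_num)
          exact_mod_cast hk2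
        have hXle : 2 * Real.exp 1 * ((d:ℝ)+1) * ((n:ℝ)-d) ≤ 2^(d:ℕ) := by
          rw [← hX]; exact hX2
        have goal2 : Real.exp 1 * ((n:ℝ) * ((n:ℝ)-1)/2) ≤ (2:ℝ)^(d:ℕ) := by
          rcases Nat.lt_or_ge d 8 with hd8 | hd8
          · interval_cases d
            · exfalso
              norm_num at hXle
              nlinarith [hXle, hnd, he1]
            · have hn7 : n ≤ 7 := by
                by_contra hcon
                push_neg at hcon
                have h8 : (8:ℝ) ≤ (n:ℝ) := by exact_mod_cast hcon
                norm_num at hXle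
                nlinarith [hXle, he1]
              have hn7r : (n:ℝ) ≤ 7 := by exact_mod_cast hn7
              norm_num
              nlinarith [he2, hn7r, hnr1]
            · have hn9 : n ≤ 9 := by
                by_contra hcon
                push_neg at hcon
                have h10 : (10:ℝ) ≤ (n:ℝ) := by exact_mod_cast hcon
                norm_num at hXle
                nlinarith [hXle, he1]
              have hn9r : (n:ℝ) ≤ 9 := by exact_mod_cast hn9
              norm_num
              nlinarith [he2, hn9r, hnr1]
          · calc Real.exp 1 * ((n:ℝ)*((n:ℝ)-1)/2)
                ≤ 2.7182818286 * ((2*(d:ℝ)-3)*((d:ℝ)-2)) := by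
                  nlinarith [hbound, he2, hd5r, hnr1]
              _ ≤ 2^d := key2 d hd8
        linarith
      · have hk3' := hk3 hX2
        have hk3d : (3:ℝ)^(d:ℕ) ≤ (k:ℝ)^d := by
          apply pow_le_pow_left₀ (by norm_num)
          exact_mod_cast hk3'
        have goal3 : Real.exp 1 * ((n:ℝ)*((n:ℝ)-1)/2) ≤ (3:ℝ)^(d:ℕ) := by
          calc Real.exp 1 * ((n:ℝ)*((n:ℝ)-1)/2)
              ≤ 3 * ((2*(d:ℝ)-3)*((d:ℝ)-2)) := by
                nlinarith [hbound, he2, hd5r, hnr1]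
            _ ≤ 3^d := key3 d hd5
        linarith
  · set m : ℕ := n - (2*d+2) with hm
    have hnm : n = m + (2*d+2) := by omega
    have hid : n.choose 2 = m.choose 2 + m*(2*d+2) + (2*d+2).choose 2 := by
      conv_lhs => rw [hnm]
      exact choose_add_two m (2*d+2)
    have hc22 : (2*d+2).choose 2 = (d+1)*(2*d+1) := by
      rw [Nat.choose_two_right]
      have h21 : 2*d+2-1 = 2*d+1 := by omega
      rw [h21]
      have h22 : (2*d+2)*(2*d+1) = 2*((d+1)*(2*d+1)) := by ring
      rw [h22, Nat.mul_div_cancel_left _ (by norm_num)]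
    have hDval : D = m*(2*d+2) + (d+1)*(2*d+1) := by
      rw [hD, hid, hc22]; omega
    have hD2 : 2 ≤ D := by
      rw [hDval]
      have h15 : 3*5 ≤ (d+1)*(2*d+1) := Nat.mul_le_mul (by omega) (by omega)
      omega
    refine ⟨hD2, hk2, ?_⟩
    have hmr : ((m:ℕ):ℝ) = (n:ℝ) - 2*(d:ℝ) - 2 := by
      rw [hm]
      rw [Nat.cast_sub (by omega : 2*d+2 ≤ n)]
      push_cast; ring
    have hDr : ((D:ℕ):ℝ) = ((n:ℝ)-2*(d:ℝ)-2)*(2*(d:ℝ)+2) + ((d:ℝ)+1)*(2*(d:ℝ)+1) := by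
      rw [hDval]
      push_cast [hmr]
      ring
    calc Real.exp 1 * ((D:ℕ):ℝ) ≤ X := by
          rw [hDr, hX]
          nlinarith [Real.exp_pos 1, he2, hdr, hnd]
      _ ≤ (k:ℝ)^d := hkd

/-! ### Graph-specific auxiliary definitions -/

private noncomputable def Rv [Fintype V] [DecidableEq V] (G : SimpleGraph V)
    [DecidableRel G.Adj] (v : V) : Finset (V ⊕ G.edgeSet) :=
  letI : DecidablePred (fun x : V ⊕ G.edgeSet =>
      Sum.elim (fun u : V => u = v) (fun e : G.edgeSet => v ∈ (e : Sym2 V)) x) :=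
    Classical.decPred _
  ((Finset.univ : Finset (V ⊕ G.edgeSet)).filter
    (fun x : V ⊕ G.edgeSet =>
      Sum.elim (fun u : V => u = v) (fun e : G.edgeSet => v ∈ (e : Sym2 V)) x))

private lemma mem_Rv [Fintype V] [DecidableEq V] {G : SimpleGraph V} [DecidableRel G.Adj]
    {v : V} {x : V ⊕ G.edgeSet} :
    x ∈ Rv G v ↔ Sum.elim (fun u : V => u = v) (fun e : G.edgeSet => v ∈ (e : Sym2 V)) x := by
  rw [Rv]
  simp

private lemma mem_incTotal [Fintype V] [DecidableEq V] {G : SimpleGraph V} [DecidableRel G.Adj]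
    (σ : LinearOrder (V ⊕ G.edgeSet)) {v : V} {x : V ⊕ G.edgeSet} :
    x ∈ incTotal G σ v ↔ x ∈ Rv G v := by
  letI := σ
  rw [show incTotal G σ v = (Rv G v).sort σ.le from rfl, Finset.mem_sort]

private lemma color_congr [Fintype V] [DecidableEq V] {G : SimpleGraph V} [DecidableRel G.Adj]
    (σ : LinearOrder (V ⊕ G.edgeSet)) {v : V} {w w' : V ⊕ G.edgeSet → ℝ}
    (h : ∀ x ∈ Rv G v, w x = w' x) :
    totalSeqColor G σ w v = totalSeqColor G σ w' v :=
  List.map_congr_left (fun a ha => h a ((mem_incTotal σ).mp ha))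

private lemma color_eq_pointwise [Fintype V] [DecidableEq V] {G : SimpleGraph V}
    [DecidableRel G.Adj] (σ : LinearOrder (V ⊕ G.edgeSet)) {v : V} {w w' : V ⊕ G.edgeSet → ℝ}
    (h : totalSeqColor G σ w v = totalSeqColor G σ w' v) :
    ∀ x ∈ Rv G v, w x = w' x :=
  fun x hx => (List.map_eq_map_iff.mp h) x ((mem_incTotal σ).mpr hx)

private lemma card_Rv_ge [Fintype V] [DecidableEq V] {G : SimpleGraph V} [DecidableRel G.Adj]
    {d : ℕ} (hreg : G.IsRegularOfDegree d) (v : V) : d + 1 ≤ (Rv G v).card := by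
  classical
  set img := ((G.neighborFinset v).attach).image
      (fun u' : {x // x ∈ G.neighborFinset v} => (Sum.inr ⟨s(v, u'.1),
        (G.mem_edgeSet).mpr ((G.mem_neighborFinset v u'.1).mp u'.2)⟩ : V ⊕ G.edgeSet))
    with himg
  have hsub : insert (Sum.inl v) img ⊆ Rv G v := by
    intro x hx
    rcases Finset.mem_insert.mp hx with rfl | hx
    · rw [mem_Rv]; exact rfl
    · rw [himg, Finset.mem_image] at hx
      obtain ⟨u', -, rfl⟩ := hx
      rw [mem_Rv]
      exact Sym2.mem_mk_left v u'.1
  have hninl : (Sum.inl v : V ⊕ G.edgeSet) ∉ img := by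
    rw [himg]
    simp [Finset.mem_image]
  have himgcard : img.card = d := by
    rw [himg]
    rw [Finset.card_image_of_injOn]
    · rw [Finset.card_attach, G.card_neighborFinset_eq_degree, hreg v]
    · intro a _ b _ hab
      have h1 := Sum.inr.inj hab
      have h2 : s(v, a.1) = s(v, b.1) := congrArg Subtype.val h1
      exact Subtype.ext (Sym2.congr_right.mp h2)
  have := Finset.card_le_card hsub
  rw [Finset.card_insert_of_notMem hninl, himgcard] at this
  omega

private lemma card_inter_Rv [Fintype V] [DecidableEq V] {G : SimpleGraph V} [DecidableRel G.Adj]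
    {u v : V} (huv : u ≠ v) : ((Rv G u) ∩ (Rv G v)).card ≤ 1 := by
  classical
  apply Finset.card_le_one.mpr
  intro a ha b hb
  rw [Finset.mem_inter] at ha hb
  obtain ⟨ha1, ha2⟩ := ha
  obtain ⟨hb1, hb2⟩ := hb
  rw [mem_Rv] at ha1 ha2 hb1 hb2
  match a, b with
  | Sum.inl t, _ =>
    exfalso
    simp only [Sum.elim_inl] at ha1 ha2
    exact huv (ha1 ▸ ha2 ▸ rfl)
  | _, Sum.inl t =>
    exfalso
    simp only [Sum.elim_inl] at hb1 hb2
    exact huv (hb1 ▸ hb2 ▸ rfl)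
  | Sum.inr e, Sum.inr f =>
    simp only [Sum.elim_inr] at ha1 ha2 hb1 hb2
    have he : (e : Sym2 V) = s(u, v) := (Sym2.mem_and_mem_iff huv).mp ⟨ha1, ha2⟩
    have hf : (f : Sym2 V) = s(u, v) := (Sym2.mem_and_mem_iff huv).mp ⟨hb1, hb2⟩
    have : e = f := Subtype.ext (he.trans hf.symm)
    rw [this]

private lemma share_Rv [Fintype V] [DecidableEq V] {G : SimpleGraph V} [DecidableRel G.Adj]
    {c a : V} {y : V ⊕ G.edgeSet} (h1 : y ∈ Rv G c) (h2 : y ∈ Rv G a) :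
    a ∈ insert c (G.neighborFinset c) := by
  rw [mem_Rv] at h1 h2
  match y with
  | Sum.inl t =>
    simp only [Sum.elim_inl] at h1 h2
    subst h1
    rw [h2]
    exact Finset.mem_insert_self _ _
  | Sum.inr e =>
    simp only [Sum.elim_inr] at h1 h2
    by_cases hac : a = c
    · subst hac; exact Finset.mem_insert_self _ _
    · have hca : c ≠ a := fun h => hac h.symm
      have hedge : (e : Sym2 V) = s(c, a) := (Sym2.mem_and_mem_iff hca).mp ⟨h1, h2⟩
      have hadj : G.Adj c a := by
        have he := e.2
        rw [hedge] at he
        exact (G.mem_edgeSet).mp he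
      exact Finset.mem_insert_of_mem ((G.mem_neighborFinset c a).mpr hadj)

private lemma card_notdiag_ge {W : Type*} [DecidableEq W] [Fintype W] (S : Finset W)
    (P : {z : Sym2 W // ¬ z.IsDiag} → Prop) [DecidablePred P]
    (hP : ∀ (q : {z : Sym2 W // ¬z.IsDiag}), (∀ c ∈ q.1, c ∉ S) → P q) :
    ((Finset.univ \ S).card).choose 2 ≤ (Finset.univ.filter P).card := by
  classical
  set Vc := (Finset.univ : Finset W) \ S with hVc
  have hι2 : Fintype.card {z : Sym2 {x // x ∈ Vc} // ¬ z.IsDiag} = (Vc.card).choose 2 := by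
    rw [Sym2.card_subtype_not_diag, Fintype.card_coe]
  have hmapdiag : ∀ z : Sym2 {x // x ∈ Vc}, (Sym2.map Subtype.val z).IsDiag → z.IsDiag := by
    intro z
    induction z using Sym2.ind with
    | _ a b =>
      rw [Sym2.map_pair_eq, Sym2.mk_isDiag_iff, Sym2.mk_isDiag_iff]
      exact fun h => Subtype.ext h
  have hmemel : ∀ (z : Sym2 {x // x ∈ Vc}) (c : W), c ∈ Sym2.map Subtype.val z → c ∉ S := by
    intro z
    induction z using Sym2.ind with
    | _ a b =>
      intro c hc
      rw [Sym2.map_pair_eq, Sym2.mem_iff] at hc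
      rcases hc with rfl | rfl
      · exact (Finset.mem_sdiff.mp a.2).2
      · exact (Finset.mem_sdiff.mp b.2).2
  have hcle := Finset.card_le_card_of_injOn
    (f := fun z : {z : Sym2 {x // x ∈ Vc} // ¬ z.IsDiag} =>
      (⟨Sym2.map Subtype.val z.1, fun h => z.2 (hmapdiag _ h)⟩ : {z : Sym2 W // ¬ z.IsDiag}))
    (s := Finset.univ) (t := Finset.univ.filter P)
    (fun z _ => Finset.mem_filter.mpr ⟨Finset.mem_univ _, hP _ (hmemel z.1)⟩)
    (by
      intro z1 _ z2 _ h
      apply Subtype.ext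
      apply Sym2.map.injective Subtype.val_injective
      exact congrArg Subtype.val h)
  rwa [Finset.card_univ, hι2] at hcle

/-- If `G` is a `d`-regular graph on `n` vertices, `d ≥ 2`, then
`ls_σ^t(G) ≤ ⌈(2e(d+1)(n−d))^{1/d}⌉`: for every linear order on `V(G) ⊕ E(G)` and every
assignment of sets of that many reals to the vertices and edges, some total weighting from
the sets gives all vertices pairwise distinct induced total sequences. -/
theorem stmt_17 [Fintype V] [DecidableEq V] (G : SimpleGraph V) [DecidableRel G.Adj]
    (d : ℕ) (hd : 2 ≤ d) (hreg : G.IsRegularOfDegree d)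
    (σ : LinearOrder (V ⊕ G.edgeSet))
    (L : V ⊕ G.edgeSet → Finset ℝ)
    (hL : ∀ x, (L x).card =
      ⌈(2 * Real.exp 1 * ((d : ℝ) + 1) * ((Fintype.card V : ℝ) - (d : ℝ)))
        ^ ((1 : ℝ) / (d : ℝ))⌉₊) :
    ∃ w : V ⊕ G.edgeSet → ℝ, (∀ x, w x ∈ L x) ∧
      ∀ u v : V, u ≠ v → totalSeqColor G σ w u ≠ totalSeqColor G σ w v := by
  classical
  rcases isEmpty_or_nonempty V with hV | hV
  · have hEmpty : IsEmpty (V ⊕ G.edgeSet) := by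
      constructor
      rintro (v | e)
      · exact hV.elim v
      · exact hV.elim e.1.out.1
    exact ⟨fun x => (hEmpty.elim x), fun x => (hEmpty.elim x), fun u => (hV.elim u)⟩
  · obtain ⟨v₀⟩ := hV
    have hdn : d + 1 ≤ Fintype.card V := by
      have h1 := G.degree_lt_card_verts v₀
      rw [hreg v₀] at h1; omega
    set n := Fintype.card V with hn
    set k : ℕ := ⌈(2 * Real.exp 1 * ((d : ℝ) + 1) * ((n : ℝ) - (d : ℝ)))
        ^ ((1 : ℝ) / (d : ℝ))⌉₊ with hkdef
    set D : ℕ := n.choose 2 - (n - (2*d+2)).choose 2 with hDdef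
    have hnum := num_main d n hd hdn
    rw [← hkdef, ← hDdef] at hnum
    obtain ⟨hD2, hk2, hED⟩ := hnum
    set Ω : Finset ((V ⊕ G.edgeSet) → ℝ) := Fintype.piFinset (fun x => L x) with hΩdef
    have hΩcard : Ω.card = k ^ (Fintype.card (V ⊕ G.edgeSet)) := by
      rw [hΩdef, Fintype.card_piFinset]
      calc ∏ x, (L x).card = ∏ _x : V ⊕ G.edgeSet, k := by
            apply Finset.prod_congr rfl
            intro x _
            exact hL x
        _ = k ^ (Fintype.card (V ⊕ G.edgeSet)) := by
            rw [Finset.prod_const, Finset.card_univ]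
    have hΩpos : 0 < Ω.card := by
      rw [hΩcard]
      exact pow_pos (by omega) _
    have hkR : (0:ℝ) < (k:ℝ)^d := by
      have : (0:ℝ) < (k:ℝ) := by exact_mod_cast (by omega : 0 < k)
      positivity
    have hmain : ∃ w ∈ Fintype.piFinset (fun x : V ⊕ G.edgeSet => L x),
        ∀ q : {z : Sym2 V // ¬ z.IsDiag}, w ∉ Ω.filter (fun w => Sym2.lift
          ⟨fun u v => totalSeqColor G σ w u = totalSeqColor G σ w v,
           fun u v => propext ⟨Eq.symm, Eq.symm⟩⟩ q.1) := by
      refine lll_count (ι := {z : Sym2 V // ¬ z.IsDiag}) (fun x => L x)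
        (fun q => Ω.filter (fun w => Sym2.lift
          ⟨fun u v => totalSeqColor G σ w u = totalSeqColor G σ w v,
           fun u v => propext ⟨Eq.symm, Eq.symm⟩⟩ q.1))
        (fun q => Sym2.lift ⟨fun u v => Rv G u ∪ Rv G v,
           fun u v => Finset.union_comm _ _⟩ q.1)
        D (((k:ℝ)^d)⁻¹) hΩpos ?_ ?_ ?_ hD2 ?_ ?_
      · -- determinedness
        rintro ⟨z, hz⟩
        revert hz
        induction z using Sym2.ind with
        | _ u v =>
          intro hz w1 hw1
          rw [Finset.mem_filter] at hw1
          obtain ⟨hw1Ω, hbad⟩ := hw1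
          rw [Sym2.lift_mk] at hbad
          refine ⟨hw1Ω, ?_⟩
          intro w2 hw2 hagree
          rw [Finset.mem_filter]
          refine ⟨hw2, ?_⟩
          simp only [Sym2.lift_mk] at hagree
          have hu : totalSeqColor G σ w2 u = totalSeqColor G σ w1 u :=
            color_congr σ (fun x hx => hagree x (Finset.mem_union_left _ hx))
          have hv : totalSeqColor G σ w2 v = totalSeqColor G σ w1 v :=
            color_congr σ (fun x hx => hagree x (Finset.mem_union_right _ hx))
          have hbad2 : totalSeqColor G σ w1 u = totalSeqColor G σ w1 v := hbad
          show totalSeqColor G σ w2 u = totalSeqColor G σ w2 v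
          rw [hu, hv]
          exact hbad2
      · -- nonempty variable sets
        rintro ⟨z, hz⟩
        revert hz
        induction z using Sym2.ind with
        | _ u v =>
          intro hz
          exact ⟨Sum.inl u, Finset.mem_union_left _ (mem_Rv.mpr rfl)⟩
      · -- probability bound
        rintro ⟨z, hz⟩
        revert hz
        induction z using Sym2.ind with
        | _ u v =>
          intro hz
          have huv : u ≠ v := fun h => hz (Sym2.mk_isDiag_iff.mpr h)
          set F := Rv G u \ Rv G v with hF
          have hFd : d ≤ F.card := by
            have h1 : F.card + (Rv G u ∩ Rv G v).card = (Rv G u).card := by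
              rw [hF]; exact Finset.card_sdiff_add_card_inter _ _
            have h2 := card_inter_Rv (G := G) huv
            have h3 := card_Rv_ge hreg u
            omega
          set Bq := Ω.filter (fun w => Sym2.lift
            ⟨fun u v => totalSeqColor G σ w u = totalSeqColor G σ w v,
             fun u v => propext ⟨Eq.symm, Eq.symm⟩⟩
            ((⟨s(u,v), hz⟩ : {z : Sym2 V // ¬ z.IsDiag}) : Sym2 V)) with hBq
          have hdetB : ∀ w1 ∈ Bq, ∀ w2 ∈ Bq,
              (∀ x, x ∉ F → w1 x = w2 x) → w1 = w2 := by
            intro w1 h1 w2 h2 hagree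
            rw [hBq, Finset.mem_filter] at h1 h2
            have hb1 : totalSeqColor G σ w1 u = totalSeqColor G σ w1 v := h1.2
            have hb2 : totalSeqColor G σ w2 u = totalSeqColor G σ w2 v := h2.2
            have hvv : totalSeqColor G σ w1 v = totalSeqColor G σ w2 v :=
              color_congr σ (fun x hx => hagree x
                (fun hxf => ((Finset.mem_sdiff.mp hxf).2 hx)))
            have huu : totalSeqColor G σ w1 u = totalSeqColor G σ w2 u := by
              rw [hb1, hb2]; exact hvv
            have hRu := color_eq_pointwise σ huu
            funext x
            by_cases hx : x ∈ F
            · exact hRu x (Finset.mem_sdiff.mp hx).1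
            · exact hagree x hx
          have hBsub : Bq ⊆ Fintype.piFinset (fun x : V ⊕ G.edgeSet => L x) := by
            rw [hBq, hΩdef]; exact Finset.filter_subset _ _
          have hcd := card_det (fun x => L x) Bq F k hBsub hL hdetB
          have hmono : Bq.card * k^d ≤ Bq.card * k^F.card :=
            Nat.mul_le_mul_left _ (Nat.pow_le_pow_right (by omega) hFd)
          have hnat : Bq.card * k^d ≤ k ^ (Fintype.card (V ⊕ G.edgeSet)) :=
            le_trans hmono hcd
          rw [hΩcard]
          rw [inv_mul_eq_div, le_div_iff₀ hkR]
          exact_mod_cast hnat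
      · -- dependency bound
        rintro ⟨z, hz⟩
        revert hz
        induction z using Sym2.ind with
        | _ u v =>
          intro hz
          set S : Finset V := insert u (G.neighborFinset u) ∪ insert v (G.neighborFinset v)
            with hS
          have hScard : S.card ≤ 2*d+2 := by
            rw [hS]
            have h1 := Finset.card_insert_le u (G.neighborFinset u)
            have h2 := Finset.card_insert_le v (G.neighborFinset v)
            have h3 := Finset.card_union_le (insert u (G.neighborFinset u))
              (insert v (G.neighborFinset v))
            have h4 : (G.neighborFinset u).card = d := by
              rw [G.card_neighborFinset_eq_degree]; exact hreg u
            have h5 : (G.neighborFinset v).card = d := by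
              rw [G.card_neighborFinset_eq_degree]; exact hreg v
            omega
          have hsub : (Finset.univ.filter (fun q : {z : Sym2 V // ¬ z.IsDiag} =>
              ¬ Disjoint (Sym2.lift ⟨fun u v => Rv G u ∪ Rv G v,
                fun u v => Finset.union_comm _ _⟩
                ((⟨s(u,v), hz⟩ : {z : Sym2 V // ¬ z.IsDiag}) : Sym2 V))
                (Sym2.lift ⟨fun u v => Rv G u ∪ Rv G v,
                fun u v => Finset.union_comm _ _⟩ q.1)))
              ⊆ Finset.univ.filter (fun q : {z : Sym2 V // ¬ z.IsDiag} =>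
                  ¬ ∀ c ∈ q.1, c ∉ S) := by
            intro q hq
            rw [Finset.mem_filter] at hq
            obtain ⟨-, hndis⟩ := hq
            rw [Finset.mem_filter]
            refine ⟨Finset.mem_univ _, ?_⟩
            obtain ⟨z', hz'⟩ := q
            revert hndis
            induction z' using Sym2.ind with
            | _ a b =>
              intro hndis
              have hndis2 : ¬ Disjoint (Rv G u ∪ Rv G v) (Rv G a ∪ Rv G b) := hndis
              obtain ⟨y, hyuv, hyab⟩ := Finset.not_disjoint_iff.mp hndis2
              intro hall
              have hget : ∀ c' : V, c' ∈ s(a,b) → (∃ c : V, y ∈ Rv G c ∧ c ∈ S) → True := by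
                intro _ _ _; trivial
              rcases Finset.mem_union.mp hyab with h2 | h2
              · rcases Finset.mem_union.mp hyuv with h1 | h1
                · exact hall a (Sym2.mem_mk_left a b)
                    (by
                      rw [hS]
                      exact Finset.mem_union_left _ (share_Rv h1 h2))
                · exact hall a (Sym2.mem_mk_left a b)
                    (by
                      rw [hS]
                      exact Finset.mem_union_right _ (share_Rv h1 h2))
              · rcases Finset.mem_union.mp hyuv with h1 | h1
                · exact hall b (Sym2.mem_mk_right a b)
                    (by
                      rw [hS]
                      exact Finset.mem_union_left _ (share_Rv h1 h2))
                · exact hall b (Sym2.mem_mk_right a b)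
                    (by
                      rw [hS]
                      exact Finset.mem_union_right _ (share_Rv h1 h2))
          refine le_trans (Finset.card_le_card hsub) ?_
          have hsplit := Finset.card_filter_add_card_filter_not
            (s := (Finset.univ : Finset {z : Sym2 V // ¬ z.IsDiag}))
            (p := fun q : {z : Sym2 V // ¬ z.IsDiag} => ∀ c ∈ q.1, c ∉ S)
          have hcardu : (Finset.univ : Finset {z : Sym2 V // ¬ z.IsDiag}).card = n.choose 2 := by
            rw [Finset.card_univ, Sym2.card_subtype_not_diag, ← hn]
          have hNT := card_notdiag_ge S (fun q : {z : Sym2 V // ¬ z.IsDiag} => ∀ c ∈ q.1, c ∉ S)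
            (fun q hq => hq)
          have hVccard : ((Finset.univ : Finset V) \ S).card = n - S.card := by
            rw [Finset.card_sdiff_of_subset (Finset.subset_univ S), Finset.card_univ, ← hn]
          rw [hVccard] at hNT
          have hmono2 : (n - (2*d+2)).choose 2 ≤ (n - S.card).choose 2 :=
            Nat.choose_le_choose 2 (by omega)
          rw [hDdef]
          omega
      · -- the LLL numeric condition
        have hDR : (0:ℝ) < (D:ℝ) := by
          have : (0:ℕ) < D := by omega
          exact_mod_cast this
        set m : ℕ := D - 1 with hm
        have hm1 : 1 ≤ m := by omega
        have hmR : ((m:ℕ):ℝ) = (D:ℝ) - 1 := by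
          rw [hm, Nat.cast_sub (by omega : 1 ≤ D)]
          norm_num
        have hmpos : (0:ℝ) < (m:ℝ) := by
          have : (0:ℕ) < m := by omega
          exact_mod_cast this
        have hexp : Real.exp (-(1/(m:ℝ))) ≤ 1 - 1/((m:ℝ)+1) := by
          have h1 : 1/(m:ℝ) + 1 ≤ Real.exp (1/(m:ℝ)) := Real.add_one_le_exp _
          rw [Real.exp_neg]
          have h2 : (0:ℝ) < 1/(m:ℝ)+1 := by positivity
          calc (Real.exp (1/(m:ℝ)))⁻¹ ≤ (1/(m:ℝ)+1)⁻¹ := by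
                apply inv_anti₀ h2 h1
            _ = 1 - 1/((m:ℝ)+1) := by
              rw [eq_sub_iff_add_eq, ← one_div]
              rw [div_add_div _ _ (by positivity : (1/(m:ℝ)+1) ≠ 0)
                (by positivity : (m:ℝ)+1 ≠ 0)]
              rw [div_eq_one_iff_eq (by positivity)]
              field_simp
              ring
        have hepow : Real.exp (-1) ≤ (1 - 1/((m:ℝ)+1))^m := by
          have h4 : Real.exp (-1) = (Real.exp (-(1/(m:ℝ))))^m := by
            rw [← Real.exp_nat_mul]
            congr 1
            field_simp
          rw [h4]
          exact pow_le_pow_left₀ (Real.exp_nonneg _) hexp m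
        have hmD : (m:ℝ)+1 = (D:ℝ) := by rw [hmR]; ring
        rw [hmD] at hepow
        have heD : (0:ℝ) < Real.exp 1 * (D:ℝ) := by positivity
        have h5 : ((k:ℝ)^d)⁻¹ ≤ (Real.exp 1 * (D:ℝ))⁻¹ := inv_anti₀ heD hED
        have h6 : (Real.exp 1 * (D:ℝ))⁻¹ = Real.exp (-1) / (D:ℝ) := by
          rw [mul_inv, Real.exp_neg, div_eq_mul_inv]
        calc ((k:ℝ)^d)⁻¹ ≤ (Real.exp 1 * (D:ℝ))⁻¹ := h5
          _ = Real.exp (-1) / (D:ℝ) := h6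
          _ ≤ (1 - 1/(D:ℝ))^m / (D:ℝ) := (div_le_div_iff_of_pos_right hDR).mpr hepow
    obtain ⟨w, hwΩ, hwA⟩ := hmain
    refine ⟨w, fun x => Fintype.mem_piFinset.mp hwΩ x, ?_⟩
    intro u v huv heq
    have hnd : ¬ (s(u,v)).IsDiag := by rw [Sym2.mk_isDiag_iff]; exact huv
    apply hwA ⟨s(u,v), hnd⟩
    rw [Finset.mem_filter]
    exact ⟨hwΩ, heq⟩
end

section
/- Let n and k be integers with k ≥ 2, and let G be a finite simple graph on n vertices with minimum degree δ satisfying δ > log_k((e/2)(n+1)² + 1) + 1, where e is Euler's number. Then ls_σ^e(G) ≤ k: for every linear order on E(G) and every assignment to each edge of a set of k real numbers, there exists a weighting taking each edge's weight from its assigned set such that all vertices of G receive pairwise distinct induced sequences. -/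
/-!
Common definitions: sequence colourings induced by an edge weighting and a linear
order on the edge set of a finite simple graph.
-/

open Finset

variable {V : Type*}

/-- Membership in `incEdges`. -/
lemma mem_incEdges_aux [Fintype V] [DecidableEq V] (G : SimpleGraph V) [DecidableRel G.Adj]
    (σ : LinearOrder G.edgeSet) (x : V) (e : G.edgeSet) :
    e ∈ incEdges G σ x ↔ x ∈ (e : Sym2 V) := by
  letI := σ
  simp [incEdges, Finset.mem_sort]

/-- Key injectivity lemma: if two weightings both make `u` and `v` collide and agree on
all edges that are not (incident to `u` and avoiding `v`), then they are equal. -/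
lemma key_inj [Fintype V] [DecidableEq V] (G : SimpleGraph V) [DecidableRel G.Adj]
    (σ : LinearOrder G.edgeSet) {u v : V} (w w' : G.edgeSet → ℝ)
    (hw : seqColor G σ w u = seqColor G σ w v)
    (hw' : seqColor G σ w' u = seqColor G σ w' v)
    (hag : ∀ e : G.edgeSet, ¬(u ∈ (e : Sym2 V) ∧ v ∉ (e : Sym2 V)) → w e = w' e) :
    w = w' := by
  funext e
  by_cases he : u ∈ (e : Sym2 V) ∧ v ∉ (e : Sym2 V)
  · have hmem : e ∈ incEdges G σ u := (mem_incEdges_aux G σ u e).mpr he.1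
    obtain ⟨i, hi, rfl⟩ := List.mem_iff_getElem.mp hmem
    have hlen : (incEdges G σ u).length = (incEdges G σ v).length := by
      have h := congrArg List.length hw
      simpa [seqColor] using h
    have hi' : i < (incEdges G σ v).length := hlen ▸ hi
    have hvmem : v ∈ (((incEdges G σ v)[i]'hi' : G.edgeSet) : Sym2 V) := by
      have : (incEdges G σ v)[i]'hi' ∈ incEdges G σ v := List.getElem_mem _
      exact (mem_incEdges_aux G σ v _).mp this
    have key : ∀ f : G.edgeSet → ℝ, seqColor G σ f u = seqColor G σ f v →
        f ((incEdges G σ u)[i]'hi) = f ((incEdges G σ v)[i]'hi') := by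
      intro f hf
      have hf' : (incEdges G σ u).map f = (incEdges G σ v).map f := hf
      have h1 : ((incEdges G σ u).map f)[i]'(by simpa using hi)
          = ((incEdges G σ v).map f)[i]'(by simpa using hi') := by
        simp only [hf']
      simpa using h1
    have h2 : w ((incEdges G σ v)[i]'hi') = w' ((incEdges G σ v)[i]'hi') :=
      hag _ (fun h => h.2 hvmem)
    rw [key w hw, h2, ← key w' hw']
  · exact hag e he

/-- If `k ≥ 2` and `G` is a graph on `n` vertices with
`δ(G) > log_k((e/2)(n+1)² + 1) + 1`, then `ls_σ^e(G) ≤ k`. -/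
theorem stmt_19 [Fintype V] [DecidableEq V] (G : SimpleGraph V) [DecidableRel G.Adj]
    (n k : ℕ) (hk : 2 ≤ k) (hn : Fintype.card V = n)
    (hδ : Real.logb k (Real.exp 1 / 2 * ((n : ℝ) + 1) ^ 2 + 1) + 1 < (G.minDegree : ℝ))
    (σ : LinearOrder G.edgeSet)
    (L : G.edgeSet → Finset ℝ) (hL : ∀ e, (L e).card = k) :
    ∃ w : G.edgeSet → ℝ, (∀ e, w e ∈ L e) ∧
      ∀ u v : V, u ≠ v → seqColor G σ w u ≠ seqColor G σ w v := by
  classical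
  set x : ℝ := Real.exp 1 / 2 * ((n : ℝ) + 1) ^ 2 + 1 with hxdef
  have he1 : (2 : ℝ) < Real.exp 1 := by
    have := Real.exp_one_gt_d9
    linarith
  have hn0 : (0 : ℝ) ≤ (n : ℝ) := Nat.cast_nonneg n
  have hx1 : (1 : ℝ) ≤ x := by
    rw [hxdef]
    have h0 : (0 : ℝ) ≤ Real.exp 1 / 2 * ((n : ℝ) + 1) ^ 2 := by positivity
    linarith
  have hk1' : 1 < k := by omega
  have hk1 : (1 : ℝ) < (k : ℝ) := by exact_mod_cast hk1'
  have hlog0 : 0 ≤ Real.logb k x := Real.logb_nonneg hk1 hx1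
  set δ := G.minDegree with hδdef
  have hδ2 : 2 ≤ δ := by
    have h1 : (1 : ℝ) < (δ : ℝ) := by linarith
    have : 1 < δ := by exact_mod_cast h1
    omega
  have hxk : x < (k : ℝ) ^ (δ - 1) := by
    have h1 : Real.logb k x < (δ : ℝ) - 1 := by linarith
    have h2 : x < (k : ℝ) ^ ((δ : ℝ) - 1) :=
      (Real.logb_lt_iff_lt_rpow hk1 (by linarith)).mp h1
    have h3 : ((δ : ℝ) - 1) = ((δ - 1 : ℕ) : ℝ) := by
      have h4 : (1 : ℕ) ≤ δ := by omega
      push_cast [h4]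
      ring
    rw [h3, Real.rpow_natCast] at h2
    exact h2
  have hnk : n * n < k ^ (δ - 1) := by
    have hxx : (n : ℝ) * (n : ℝ) < x := by
      rw [hxdef]
      nlinarith [sq_nonneg ((n : ℝ) + 1), hn0]
    have hcast : ((n * n : ℕ) : ℝ) < ((k ^ (δ - 1) : ℕ) : ℝ) := by
      push_cast
      linarith
    exact_mod_cast hcast
  have hV : Nonempty V := by
    by_contra h
    rw [not_nonempty_iff] at h
    have hδ0 : δ = 0 := by
      simp [hδdef, SimpleGraph.minDegree]
    omega
  set m := Fintype.card G.edgeSet with hmdef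
  have hδm : δ ≤ m := by
    obtain ⟨v0, hv0⟩ := G.exists_minimal_degree_vertex
    calc δ = G.degree v0 := hv0
      _ = (G.incidenceFinset v0).card := (G.card_incidenceFinset_eq_degree v0).symm
      _ ≤ G.edgeFinset.card := by
          apply Finset.card_le_card
          intro e he
          rw [SimpleGraph.mem_incidenceFinset] at he
          exact SimpleGraph.mem_edgeFinset.mpr (G.incidenceSet_subset v0 he)
      _ = m := G.edgeFinset_card
  set A : Finset (G.edgeSet → ℝ) := Fintype.piFinset L with hAdef
  have hA : A.card = k ^ m := by
    rw [hAdef, Fintype.card_piFinset]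
    simp [hL, Finset.prod_const, hmdef]
  have hBad : ∀ u v : V, u ≠ v →
      (A.filter (fun w => seqColor G σ w u = seqColor G σ w v)).card ≤ k ^ (m - (δ - 1)) := by
    intro u v huv
    set Iu : Finset G.edgeSet := univ.filter (fun e : G.edgeSet => u ∈ (e : Sym2 V)) with hIu
    set S : Finset G.edgeSet := Iu.filter (fun e : G.edgeSet => v ∉ (e : Sym2 V)) with hSdef
    have hSmem : ∀ e : G.edgeSet, e ∈ S ↔ (u ∈ (e : Sym2 V) ∧ v ∉ (e : Sym2 V)) := by
      intro e
      simp [hSdef, hIu, Finset.mem_filter]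
    have hIucard : Iu.card = G.degree u := by
      have hbij : Iu.card = (G.incidenceFinset u).card := by
        refine Finset.card_bij (fun e _ => (e : Sym2 V)) ?_ ?_ ?_
        · intro e heI
          rw [SimpleGraph.mem_incidenceFinset]
          exact ⟨e.2, (Finset.mem_filter.mp heI).2⟩
        · intro e _ e' _ h
          exact Subtype.ext h
        · intro e heI
          rw [SimpleGraph.mem_incidenceFinset] at heI
          exact ⟨⟨e, heI.1⟩, Finset.mem_filter.mpr ⟨Finset.mem_univ _, heI.2⟩, rfl⟩
      rw [hbij, SimpleGraph.card_incidenceFinset_eq_degree]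
    have hScard : δ - 1 ≤ S.card := by
      have hsplit := Finset.card_filter_add_card_filter_not
        (s := Iu) (p := fun e : G.edgeSet => v ∈ (e : Sym2 V))
      have hone : (Iu.filter (fun e : G.edgeSet => v ∈ (e : Sym2 V))).card ≤ 1 := by
        apply Finset.card_le_one.mpr
        intro a ha b hb
        simp only [hIu, Finset.mem_filter, Finset.mem_univ, true_and] at ha hb
        exact Subtype.ext (Sym2.eq_of_ne_mem huv ha.1 ha.2 hb.1 hb.2)
      have hdeg : δ ≤ G.degree u := G.minDegree_le_degree u
      have hSne : S.card = (Iu.filter (fun e : G.edgeSet => ¬ v ∈ (e : Sym2 V))).card := rfl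
      omega
    have haL : ∀ e : G.edgeSet, ∃ y, y ∈ L e := by
      intro e
      have : 0 < (L e).card := by rw [hL e]; omega
      exact Finset.card_pos.mp this
    choose a ha using haL
    set L' : G.edgeSet → Finset ℝ := fun e => if e ∈ S then {a e} else L e with hL'def
    have hT : (Fintype.piFinset L').card = k ^ (m - S.card) := by
      rw [Fintype.card_piFinset]
      rw [← Finset.prod_filter_mul_prod_filter_not univ (fun e => e ∈ S)]
      have h1 : ∀ e ∈ univ.filter (fun e : G.edgeSet => e ∈ S), (L' e).card = 1 := by
        intro e heS
        simp only [Finset.mem_filter] at heS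
        simp [hL'def, heS.2]
      have h2 : ∀ e ∈ univ.filter (fun e : G.edgeSet => e ∉ S), (L' e).card = k := by
        intro e heS
        simp only [Finset.mem_filter] at heS
        simp [hL'def, heS.2, hL]
      rw [Finset.prod_congr rfl h1, Finset.prod_congr rfl h2]
      rw [Finset.prod_const_one, Finset.prod_const, one_mul]
      congr 1
      have e1 : (univ.filter (fun e : G.edgeSet => e ∈ S)) = S := by
        simp
      have e2 := Finset.card_filter_add_card_filter_not
        (s := (univ : Finset G.edgeSet)) (p := fun e : G.edgeSet => e ∈ S)
      rw [e1] at e2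
      have e3 : (univ : Finset G.edgeSet).card = m := Finset.card_univ
      omega
    have hinj : (A.filter (fun w => seqColor G σ w u = seqColor G σ w v)).card
        ≤ (Fintype.piFinset L').card := by
      apply Finset.card_le_card_of_injOn (fun w e => if e ∈ S then a e else w e)
      · intro w hw
        rw [Finset.mem_coe, Finset.mem_filter] at hw
        have hwA : ∀ e, w e ∈ L e := Fintype.mem_piFinset.mp hw.1
        rw [Finset.mem_coe, Fintype.mem_piFinset]
        intro e
        by_cases heS : e ∈ S
        · simp [hL'def, heS]
        · simp [hL'def, heS, hwA e]
      · intro w1 hw1 w2 hw2 hΦ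
        rw [Finset.mem_coe, Finset.mem_filter] at hw1 hw2
        apply key_inj G σ w1 w2 hw1.2 hw2.2
        intro e heP
        have heS : e ∉ S := fun h => heP ((hSmem e).mp h)
        have := congrFun hΦ e
        simpa [heS] using this
    calc (A.filter (fun w => seqColor G σ w u = seqColor G σ w v)).card
        ≤ (Fintype.piFinset L').card := hinj
      _ = k ^ (m - S.card) := hT
      _ ≤ k ^ (m - (δ - 1)) := Nat.pow_le_pow_right (by omega) (by omega)
  set B : Finset (G.edgeSet → ℝ) :=
    (univ.offDiag).biUnion
      (fun p => A.filter fun w => seqColor G σ w p.1 = seqColor G σ w p.2) with hBdef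
  have hBcard : B.card < A.card := by
    have hKpos : 0 < k ^ (m - (δ - 1)) := Nat.pow_pos (by omega)
    calc B.card ≤ ∑ p ∈ univ.offDiag,
          (A.filter fun w => seqColor G σ w p.1 = seqColor G σ w p.2).card :=
        Finset.card_biUnion_le
      _ ≤ ∑ _p ∈ univ.offDiag, k ^ (m - (δ - 1)) := by
          apply Finset.sum_le_sum
          intro p hp
          exact hBad p.1 p.2 (Finset.mem_offDiag.mp hp).2.2
      _ = (univ.offDiag : Finset (V × V)).card * k ^ (m - (δ - 1)) := by
          rw [Finset.sum_const, smul_eq_mul]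
      _ ≤ (n * n) * k ^ (m - (δ - 1)) := by
          apply Nat.mul_le_mul_right
          rw [Finset.offDiag_card, Finset.card_univ, hn]
          omega
      _ < k ^ (δ - 1) * k ^ (m - (δ - 1)) := by
          exact Nat.mul_lt_mul_of_lt_of_le hnk le_rfl hKpos
      _ = k ^ m := by
          rw [← pow_add]
          congr 1
          omega
      _ = A.card := hA.symm
  have hnsub : ¬ A ⊆ B := fun h => absurd (Finset.card_le_card h) (by omega)
  obtain ⟨w, hwA, hwB⟩ := Finset.not_subset.mp hnsub
  refine ⟨w, fun e => Fintype.mem_piFinset.mp hwA e, ?_⟩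
  intro u v huv hEq
  apply hwB
  rw [hBdef]
  exact Finset.mem_biUnion.mpr
    ⟨(u, v), Finset.mem_offDiag.mpr ⟨Finset.mem_univ _, Finset.mem_univ _, huv⟩,
      Finset.mem_filter.mpr ⟨hwA, hEq⟩⟩
end
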